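/- arXiv:2010.00208 — 8 statements merged into one kernel-verified Lean document; each statement's English description precedes it below -/
import Mathlib

section
/- Let G be an abelian group and let φ₀,...,φ_N : G → ℂ satisfy the multinomial identity φ_n(x₁+⋯+x_l) = Σ_{k₁+⋯+k_l=n} (n choose k₁,...,k_l) ∏_t φ_{k_t}(x_t) for all x_i ∈ G, n = 0,...,N, where l ≥ 2. If φ₀(0) = 0, then all functions φ₀,...,φ_N are identically zero. -/
theorem stmt_0 {G : Type*} [AddCommGroup G] (l N : ℕ) (hl : 2 ≤ l)
    (φ : ℕ → G → ℂ)
    (h : ∀ n ≤ N, ∀ x : Fin l → G,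
      φ n (∑ i, x i) =
        ∑ k ∈ Finset.Nat.antidiagonalTuple l n,
          (Nat.multinomial Finset.univ k : ℂ) * ∏ t, φ (k t) (x t))
    (h0 : φ 0 0 = 0) :
    ∀ n ≤ N, ∀ x : G, φ n x = 0 := by
  haveI : NeZero l := ⟨by omega⟩
  have hsum : ∀ y : G, (∑ i : Fin l, if i = 0 then y else (0 : G)) = y := by
    intro y; simp
  -- base case: φ 0 ≡ 0
  have h0' : ∀ y : G, φ 0 y = 0 := by
    intro y
    have key := h 0 (Nat.zero_le N) (fun i => if i = 0 then y else 0)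
    rw [hsum, Finset.Nat.antidiagonalTuple_zero_right, Finset.sum_singleton] at key
    have hprod : (∏ t : Fin l, φ ((0 : Fin l → ℕ) t) (if t = 0 then y else 0)) = 0 := by
      apply Finset.prod_eq_zero (Finset.mem_univ (⟨1, by omega⟩ : Fin l))
      have : (⟨1, by omega⟩ : Fin l) ≠ 0 := by
        intro hc
        have := congrArg Fin.val hc
        simp at this
      simpa [this] using h0
    rw [key, hprod, mul_zero]
  intro n
  induction n using Nat.strong_induction_on with
  | _ n ih =>
    intro hn y
    rcases Nat.eq_zero_or_pos n with rfl | hpos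
    · exact h0' y
    have key := h n hn (fun i => if i = 0 then y else 0)
    rw [hsum] at key
    rw [key]
    apply Finset.sum_eq_zero
    intro k hk
    rw [Finset.Nat.mem_antidiagonalTuple] at hk
    have hlt : ∃ t : Fin l, k t < n := by
      by_cases hk0 : k 0 < n
      · exact ⟨0, hk0⟩
      · refine ⟨⟨1, by omega⟩, ?_⟩
        have hne : (0 : Fin l) ≠ (⟨1, by omega⟩ : Fin l) := by
          intro hc
          have := congrArg Fin.val hc
          simp at this
        have hsub : ({0, ⟨1, by omega⟩} : Finset (Fin l)) ⊆ Finset.univ :=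
          Finset.subset_univ _
        have hle : k 0 + k ⟨1, by omega⟩ ≤ n := by
          rw [← hk]
          calc k 0 + k ⟨1, by omega⟩
              = ∑ i ∈ ({0, ⟨1, by omega⟩} : Finset (Fin l)), k i := by
                rw [Finset.sum_pair hne]
            _ ≤ ∑ i, k i := Finset.sum_le_sum_of_subset hsub
        omega
    obtain ⟨t, ht⟩ := hlt
    have hz : φ (k t) (if t = 0 then y else 0) = 0 :=
      ih (k t) ht (le_trans ht.le hn) _
    rw [Finset.prod_eq_zero (Finset.mem_univ t) hz, mul_zero]
end

section
/- Let G be an abelian group, l ≥ 2, and let φ₀,...,φ_N : G → ℂ satisfy φ_n(x₁+⋯+x_l) = Σ_{k₁+⋯+k_l=n} (n choose k₁,...,k_l) ∏_t φ_{k_t}(x_t) for all x_i ∈ G and n = 0,...,N. If φ₀(0) = 1, then φ₀(x+y) = φ₀(x)φ₀(y) and φ_n(x+y) = Σ_{k=0}^{n} C(n,k) φ_k(x) φ_{n-k}(y) for all x,y ∈ G and n ≤ N; i.e. the sequence is a generalized moment sequence of order N. -/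
open Finset

lemma multinomial_subset' {α : Type*} [DecidableEq α] {s t : Finset α} (hst : s ⊆ t)
    (f : α → ℕ) (hf : ∀ i ∈ t, i ∉ s → f i = 0) :
    Nat.multinomial t f = Nat.multinomial s f := by
  have hprod : ∏ i ∈ t, Nat.factorial (f i) = ∏ i ∈ s, Nat.factorial (f i) := by
    refine (Finset.prod_subset hst ?_).symm
    intro i hi his
    rw [hf i hi his, Nat.factorial_zero]
  have hsum : ∑ i ∈ t, f i = ∑ i ∈ s, f i :=
    (Finset.sum_subset hst fun i hi his => hf i hi his).symm
  have h1 := Nat.multinomial_spec t f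
  have h2 := Nat.multinomial_spec s f
  rw [hprod, hsum, ← h2] at h1
  exact Nat.eq_of_mul_eq_mul_left (Finset.prod_pos fun i _ => Nat.factorial_pos _) h1

theorem stmt_1 {G : Type*} [AddCommGroup G] (l N : ℕ) (hl : 2 ≤ l)
    (φ : ℕ → G → ℂ)
    (h : ∀ n ≤ N, ∀ x : Fin l → G,
      φ n (∑ i, x i) =
        ∑ k ∈ Finset.Nat.antidiagonalTuple l n,
          (Nat.multinomial Finset.univ k : ℂ) * ∏ t, φ (k t) (x t))
    (h0 : φ 0 0 = 1) :
    ∀ n ≤ N, ∀ x y : G,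
      φ n (x + y) = ∑ k ∈ Finset.range (n + 1),
        (n.choose k : ℂ) * φ k x * φ (n - k) y := by
  -- Step 1: φ n 0 = 0 for 1 ≤ n ≤ N
  have hlC : ((l : ℂ) - 1) ≠ 0 := by
    have : (l : ℂ) ≠ 1 := by exact_mod_cast (by omega : l ≠ 1)
    exact sub_ne_zero.mpr this
  have hz : ∀ n, n ≤ N → 1 ≤ n → φ n 0 = 0 := by
    intro n
    induction n using Nat.strong_induction_on with
    | _ n ih =>
    intro hnN hn1
    have key := h n hnN (fun _ => 0)
    rw [Finset.sum_const, smul_zero] at key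
    set S : Finset (Fin l → ℕ) :=
      Finset.univ.image (fun t : Fin l => (Pi.single t n : Fin l → ℕ)) with hS
    have hSA : S ⊆ Finset.Nat.antidiagonalTuple l n := by
      intro k hk
      rw [hS, Finset.mem_image] at hk
      obtain ⟨t, -, rfl⟩ := hk
      rw [Finset.Nat.mem_antidiagonalTuple, Finset.sum_pi_single']
      simp
    have hzero : ∀ k ∈ Finset.Nat.antidiagonalTuple l n, k ∉ S →
        (Nat.multinomial Finset.univ k : ℂ) * ∏ t, φ (k t) 0 = 0 := by
      intro k hkA hkS
      rw [Finset.Nat.mem_antidiagonalTuple] at hkA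
      by_cases hc : ∃ t, 0 < k t ∧ k t < n
      · obtain ⟨t, ht1, ht2⟩ := hc
        have hle : k t ≤ N := le_trans ht2.le hnN
        have : φ (k t) 0 = 0 := ih (k t) ht2 hle ht1
        rw [Finset.prod_eq_zero (Finset.mem_univ t) this, mul_zero]
      · exfalso
        apply hkS
        push_neg at hc
        have hex : ∃ t, k t ≠ 0 := by
          by_contra hall
          push_neg at hall
          simp only [hall, Finset.sum_const_zero] at hkA
          omega
        obtain ⟨t, ht⟩ := hex
        have hub : k t ≤ n := hkA ▸ Finset.single_le_sum (f := k)
          (fun i _ => Nat.zero_le _) (Finset.mem_univ t)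
        have hktn : k t = n := le_antisymm hub (hc t (Nat.pos_of_ne_zero ht))
        have hrest : ∀ s, s ≠ t → k s = 0 := by
          intro s hst
          have hsum := Finset.add_sum_erase Finset.univ k (Finset.mem_univ t)
          rw [hkA] at hsum
          have hle : k s ≤ ∑ i ∈ Finset.univ.erase t, k i :=
            Finset.single_le_sum (f := k) (fun i _ => Nat.zero_le _)
              (Finset.mem_erase.mpr ⟨hst, Finset.mem_univ s⟩)
          omega
        have : k = Pi.single t n := by
          funext s
          rcases eq_or_ne s t with rfl | hst
          · simp [hktn]
          · simp [Pi.single_apply, hst, hrest s hst]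
        rw [hS, Finset.mem_image]
        exact ⟨t, Finset.mem_univ t, this.symm⟩
    rw [← Finset.sum_subset hSA hzero, hS] at key
    rw [Finset.sum_image (by
      intro a _ b _ hab
      have := congrFun hab a
      simp only [Pi.single_eq_same, Pi.single_apply] at this
      by_contra hne
      rw [if_neg hne] at this
      omega)] at key
    have hterm : ∀ t : Fin l,
        (Nat.multinomial Finset.univ (Pi.single t n) : ℂ) *
          ∏ s, φ ((Pi.single t n : Fin l → ℕ) s) 0 = φ n 0 := by
      intro t
      have hm : Nat.multinomial Finset.univ (Pi.single t n) = 1 := by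
        rw [multinomial_subset' (Finset.subset_univ {t}) _ (by
          intro i _ hi
          simp only [Finset.mem_singleton] at hi
          simp [Pi.single_apply, hi])]
        exact Nat.multinomial_singleton t _
      have hp : ∏ s, φ ((Pi.single t n : Fin l → ℕ) s) 0 = φ n 0 := by
        rw [← Finset.prod_subset (Finset.subset_univ {t}) (by
          intro i _ hi
          simp only [Finset.mem_singleton] at hi
          simp [Pi.single_apply, hi, h0])]
        simp
      rw [hm, hp, Nat.cast_one, one_mul]
    rw [Finset.sum_congr rfl (fun t _ => hterm t), Finset.sum_const,
      Finset.card_univ, Fintype.card_fin, nsmul_eq_mul] at key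
    have : ((l : ℂ) - 1) * φ n 0 = 0 := by linear_combination -key
    rcases mul_eq_zero.mp this with h' | h'
    · exact absurd h' hlC
    · exact h'
  -- Step 2: the binomial identity
  intro n hnN x y
  set i0 : Fin l := ⟨0, by omega⟩ with hi0
  set i1 : Fin l := ⟨1, by omega⟩ with hi1
  have hne : i0 ≠ i1 := by simp [hi0, hi1, Fin.ext_iff]
  set X : Fin l → G := fun t => (Pi.single i0 x : Fin l → G) t + (Pi.single i1 y : Fin l → G) t with hX
  have hXsum : ∑ t, X t = x + y := by
    rw [hX, Finset.sum_add_distrib, Finset.sum_pi_single', Finset.sum_pi_single',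
      if_pos (Finset.mem_univ i0), if_pos (Finset.mem_univ i1)]
  have hX0 : X i0 = x := by simp [hX, Pi.single_apply, hne, hne.symm]
  have hX1 : X i1 = y := by simp [hX, Pi.single_apply, hne, hne.symm]
  have hXo : ∀ t, t ≠ i0 → t ≠ i1 → X t = 0 := by
    intro t h1 h2; simp [hX, Pi.single_apply, h1, h2]
  set K : ℕ → Fin l → ℕ := fun j t => (Pi.single i0 j : Fin l → ℕ) t + (Pi.single i1 (n - j) : Fin l → ℕ) t with hK
  have hK0 : ∀ j, K j i0 = j := by intro j; simp [hK, Pi.single_apply, hne, hne.symm]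
  have hK1 : ∀ j, K j i1 = n - j := by intro j; simp [hK, Pi.single_apply, hne, hne.symm]
  have hKo : ∀ j t, t ≠ i0 → t ≠ i1 → K j t = 0 := by
    intro j t h1 h2; simp [hK, Pi.single_apply, h1, h2]
  have key := h n hnN X
  rw [hXsum] at key
  set S : Finset (Fin l → ℕ) := (Finset.range (n + 1)).image K with hS
  have hSA : S ⊆ Finset.Nat.antidiagonalTuple l n := by
    intro k hk
    rw [hS, Finset.mem_image] at hk
    obtain ⟨j, hj, rfl⟩ := hk
    rw [Finset.mem_range] at hj
    rw [Finset.Nat.mem_antidiagonalTuple, hK, Finset.sum_add_distrib,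
      Finset.sum_pi_single', Finset.sum_pi_single',
      if_pos (Finset.mem_univ i0), if_pos (Finset.mem_univ i1)]
    omega
  have hzero : ∀ k ∈ Finset.Nat.antidiagonalTuple l n, k ∉ S →
      (Nat.multinomial Finset.univ k : ℂ) * ∏ t, φ (k t) (X t) = 0 := by
    intro k hkA hkS
    rw [Finset.Nat.mem_antidiagonalTuple] at hkA
    by_cases hc : ∃ t, t ≠ i0 ∧ t ≠ i1 ∧ k t ≠ 0
    · obtain ⟨t, ht0, ht1, htz⟩ := hc
      have hub : k t ≤ n := hkA ▸ Finset.single_le_sum (f := k)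
        (fun i _ => Nat.zero_le _) (Finset.mem_univ t)
      have : φ (k t) (X t) = 0 := by
        rw [hXo t ht0 ht1]
        exact hz (k t) (le_trans hub hnN) (Nat.pos_of_ne_zero htz)
      rw [Finset.prod_eq_zero (Finset.mem_univ t) this, mul_zero]
    · exfalso
      apply hkS
      push_neg at hc
      have hsum01 : k i0 + k i1 = n := by
        rw [← hkA, ← Finset.sum_pair hne]
        exact Finset.sum_subset (Finset.subset_univ {i0, i1}) (by
          intro t _ ht
          simp only [Finset.mem_insert, Finset.mem_singleton] at ht
          push_neg at ht
          exact hc t ht.1 ht.2)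
      have : k = K (k i0) := by
        funext s
        rcases eq_or_ne s i0 with rfl | hs0
        · rw [hK0]
        · rcases eq_or_ne s i1 with rfl | hs1
          · rw [hK1]; omega
          · rw [hKo _ _ hs0 hs1, hc s hs0 hs1]
      rw [hS, Finset.mem_image]
      exact ⟨k i0, Finset.mem_range.mpr (by omega), this.symm⟩
  rw [← Finset.sum_subset hSA hzero, hS] at key
  rw [Finset.sum_image (by
    intro a _ b _ hab
    have := congrFun hab i0
    rwa [hK0, hK0] at this)] at key
  rw [key]
  refine Finset.sum_congr rfl ?_
  intro j hj
  rw [Finset.mem_range] at hj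
  have hm : Nat.multinomial Finset.univ (K j) = n.choose j := by
    rw [multinomial_subset' (Finset.subset_univ {i0, i1}) _ (by
      intro t _ ht
      simp only [Finset.mem_insert, Finset.mem_singleton] at ht
      push_neg at ht
      exact hKo j t ht.1 ht.2)]
    rw [Nat.binomial_eq_choose hne, hK0, hK1]
    congr 1
    omega
  have hp : ∏ t, φ (K j t) (X t) = φ j x * φ (n - j) y := by
    rw [← Finset.prod_subset (Finset.subset_univ {i0, i1}) (by
      intro t _ ht
      simp only [Finset.mem_insert, Finset.mem_singleton] at ht
      push_neg at ht
      rw [hKo j t ht.1 ht.2, hXo t ht.1 ht.2, h0])]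
    rw [Finset.prod_pair hne, hK0, hK1, hX0, hX1]
  rw [hm, hp, mul_assoc]
end

section
/- Under the hypotheses of the multinomial identity with l ≥ 2 and φ₀(0) ≠ 0, one has φ_n(0) = 0 for every n with 1 ≤ n ≤ N. -/
open Finset

lemma aux_mult_single (l n : ℕ) (t : Fin l) :
    Nat.multinomial Finset.univ (Pi.single t n) = 1 := by
  unfold Nat.multinomial
  rw [Finset.sum_pi_single' t n, Finset.prod_eq_single t
    (by intro b _ hb; simp [Pi.single_eq_of_ne hb]) (by simp)]
  simp [Nat.div_self (Nat.factorial_pos n)]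

theorem stmt_2 {G : Type*} [AddCommGroup G] (l N : ℕ) (hl : 2 ≤ l)
    (φ : ℕ → G → ℂ)
    (h : ∀ n ≤ N, ∀ x : Fin l → G,
      φ n (∑ i, x i) =
        ∑ k ∈ Finset.Nat.antidiagonalTuple l n,
          (Nat.multinomial Finset.univ k : ℂ) * ∏ t, φ (k t) (x t))
    (h0 : φ 0 0 ≠ 0) :
    ∀ n, 1 ≤ n → n ≤ N → φ n 0 = 0 := by
  classical
  have key : ∀ n ≤ N, φ n 0 = ∑ k ∈ Finset.Nat.antidiagonalTuple l n,
      (Nat.multinomial Finset.univ k : ℂ) * ∏ t, φ (k t) 0 := by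
    intro n hn
    simpa using h n hn (fun _ => 0)
  have h0l : φ 0 0 = φ 0 0 ^ l := by
    have := key 0 (Nat.zero_le N)
    rw [Finset.Nat.antidiagonalTuple_zero_right] at this
    simpa [Nat.multinomial] using this
  have hpow : φ 0 0 ^ (l - 1) = 1 := by
    have h1 : φ 0 0 * φ 0 0 ^ (l - 1) = φ 0 0 * 1 := by
      rw [mul_one, ← pow_succ']
      have he : l - 1 + 1 = l := by omega
      rw [he]
      exact h0l.symm
    exact mul_left_cancel₀ h0 h1
  intro n
  induction n using Nat.strong_induction_on with
  | _ n ih =>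
    intro h1 hN
    have hn0 : n ≠ 0 := by omega
    have hk := key n hN
    set S := Finset.Nat.antidiagonalTuple l n with hS
    have hfil : ∀ k ∈ S, ¬ (∃ t, k t = n) →
        (Nat.multinomial Finset.univ k : ℂ) * ∏ t, φ (k t) 0 = 0 := by
      intro k hkS hne
      rw [Finset.Nat.mem_antidiagonalTuple] at hkS
      push_neg at hne
      have hlt : ∀ t, k t < n := by
        intro t
        exact lt_of_le_of_ne (hkS ▸ Finset.single_le_sum (fun i _ => Nat.zero_le _) (mem_univ t)) (hne t)
      have hex : ∃ t, 1 ≤ k t := by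
        by_contra hc
        push_neg at hc
        have : ∑ t, k t = 0 := Finset.sum_eq_zero (fun t _ => by have := hc t; omega)
        omega
      obtain ⟨t, ht⟩ := hex
      have : φ (k t) 0 = 0 := ih (k t) (hlt t) ht (le_trans (le_of_lt (hlt t)) hN)
      rw [Finset.prod_eq_zero (mem_univ t) this, mul_zero]
    rw [← Finset.sum_filter_of_ne (p := fun k => ∃ t, k t = n)
      (fun k hkS hne => by by_contra hc; exact hne (hfil k hkS hc))] at hk
    have himg : S.filter (fun k => ∃ t, k t = n) =
        Finset.univ.image (fun t : Fin l => (Pi.single t n : Fin l → ℕ)) := by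
      ext k
      simp only [Finset.mem_filter, Finset.mem_image, Finset.mem_univ, true_and, hS,
        Finset.Nat.mem_antidiagonalTuple]
      constructor
      · rintro ⟨hsum, t, ht⟩
        refine ⟨t, ?_⟩
        have hrest : ∑ s ∈ Finset.univ.erase t, k s = 0 := by
          have := Finset.add_sum_erase Finset.univ k (Finset.mem_univ t)
          omega
        funext s
        by_cases hst : s = t
        · subst hst; simp [ht]
        · rw [Pi.single_eq_of_ne hst]
          have := (Finset.sum_eq_zero_iff.mp hrest) s (by simp [hst])
          omega
      · rintro ⟨t, rfl⟩
        exact ⟨by simp [Finset.sum_pi_single'], t, by simp⟩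
    rw [himg, Finset.sum_image (by
      intro a _ b _ hab
      have hthis := congrFun hab a
      simp only [Pi.single_eq_same] at hthis
      by_contra hne
      rw [Pi.single_eq_of_ne hne] at hthis
      exact hn0 hthis)] at hk
    have hterm : ∀ t : Fin l,
        (Nat.multinomial Finset.univ (Pi.single t n) : ℂ) *
          ∏ s, φ ((Pi.single t n : Fin l → ℕ) s) 0 = φ n 0 := by
      intro t
      rw [aux_mult_single]
      rw [Fintype.prod_eq_mul_prod_compl t, Pi.single_eq_same]
      have hc : ∏ s ∈ ({t}ᶜ : Finset (Fin l)), φ ((Pi.single t n : Fin l → ℕ) s) 0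
          = φ 0 0 ^ (l - 1) := by
        have hcong : ∀ s ∈ ({t}ᶜ : Finset (Fin l)),
            φ ((Pi.single t n : Fin l → ℕ) s) 0 = φ 0 0 := by
          intro s hs
          have hst : s ≠ t := by simpa using hs
          rw [Pi.single_eq_of_ne hst]
        rw [Finset.prod_congr rfl hcong, Finset.prod_const, Finset.card_compl,
          Finset.card_singleton, Fintype.card_fin]
      rw [hc, hpow]
      ring
    rw [Finset.sum_congr rfl (fun t _ => hterm t), Finset.sum_const, Finset.card_univ,
      Fintype.card_fin, nsmul_eq_mul] at hk
    have hz : ((l : ℂ) - 1) * φ n 0 = 0 := by linear_combination -hk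
    have hl1 : (l : ℂ) - 1 ≠ 0 := by
      intro hc
      have h2 : (l : ℂ) = 1 := by linear_combination hc
      have h3 : l = 1 := by exact_mod_cast h2
      omega
    exact (mul_eq_zero.mp hz).resolve_left hl1
end

section
/- Let (f_α)_{α ∈ ℕ²} be a generalized moment sequence of rank 2 on an abelian group G. Define φ_n(x) = Σ_{k=0}^{n} C(n,k) f_{(k, n-k)}(x). Then (φ_n)_{n ∈ ℕ} satisfies φ_n(x+y) = Σ_{k=0}^{n} C(n,k) φ_k(x) φ_{n-k}(y) for all x,y ∈ G, i.e. it is a generalized moment sequence of rank 1 with φ₀ = f_{(0,0)}. -/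
private lemma coeff_aux (a b c d : ℕ) :
    (((a+b+c+d).choose (a+c) : ℂ)) * ((a+c).choose a) * ((b+d).choose b) =
    ((a+b+c+d).choose (a+b)) * ((a+b).choose a) * ((c+d).choose c) := by
  rw [Nat.cast_choose ℂ (show a+c ≤ a+b+c+d by omega),
      Nat.cast_choose ℂ (show a ≤ a+c by omega),
      Nat.cast_choose ℂ (show b ≤ b+d by omega),
      Nat.cast_choose ℂ (show a+b ≤ a+b+c+d by omega),
      Nat.cast_choose ℂ (show a ≤ a+b by omega),
      Nat.cast_choose ℂ (show c ≤ c+d by omega),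
      show a+b+c+d-(a+c) = b+d from by omega,
      show (a+c)-a = c from by omega,
      show (b+d)-b = d from by omega,
      show a+b+c+d-(a+b) = c+d from by omega,
      show (a+b)-a = b from by omega,
      show (c+d)-c = d from by omega]
  have h : ∀ m : ℕ, (m.factorial : ℂ) ≠ 0 := fun m => Nat.cast_ne_zero.mpr m.factorial_ne_zero
  rw [div_mul_div_comm, div_mul_div_comm, div_mul_div_comm, div_mul_div_comm, div_eq_div_iff
    (by simp [Nat.factorial_ne_zero]) (by simp [Nat.factorial_ne_zero])]
  ring

private lemma coeff_main {n k p q : ℕ} (hk : k ≤ n) (hp : p ≤ k) (hq : q ≤ n - k) :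
    (n.choose k : ℂ) * (k.choose p) * ((n-k).choose q) =
    (n.choose (p+q)) * ((p+q).choose p) * ((n-(p+q)).choose (k-p)) := by
  have h := coeff_aux p q (k-p) (n-k-q)
  rw [show p+q+(k-p)+(n-k-q) = n from by omega,
      show p+(k-p) = k from by omega,
      show q+(n-k-q) = n-k from by omega,
      show (k-p)+(n-k-q) = n-(p+q) from by omega] at h
  exact h

theorem stmt_7 {G : Type*} [AddCommGroup G]
    (f : ℕ → ℕ → G → ℂ)
    (hf : ∀ (i j : ℕ) (x y : G),
      f i j (x + y) = ∑ p ∈ Finset.range (i + 1), ∑ q ∈ Finset.range (j + 1),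
        (i.choose p : ℂ) * (j.choose q : ℂ) * f p q x * f (i - p) (j - q) y) :
    ∀ (n : ℕ) (x y : G),
      (∑ k ∈ Finset.range (n + 1), (n.choose k : ℂ) * f k (n - k) (x + y)) =
        ∑ k ∈ Finset.range (n + 1), (n.choose k : ℂ) *
          (∑ i ∈ Finset.range (k + 1), (k.choose i : ℂ) * f i (k - i) x) *
          (∑ j ∈ Finset.range (n - k + 1), ((n - k).choose j : ℂ) * f j (n - k - j) y) := by
  intro n x y
  -- expand both sides into triple sums over the same sigma set
  have L : (∑ k ∈ Finset.range (n + 1), (n.choose k : ℂ) * f k (n - k) (x + y)) =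
      ∑ s ∈ (Finset.range (n+1)).sigma
        (fun k => Finset.range (k+1) ×ˢ Finset.range (n-k+1)),
        (n.choose s.1 : ℂ) * (s.1.choose s.2.1) * ((n-s.1).choose s.2.2) *
          f s.2.1 s.2.2 x * f (s.1 - s.2.1) (n - s.1 - s.2.2) y := by
    rw [Finset.sum_sigma]
    refine Finset.sum_congr rfl fun k _ => ?_
    rw [hf, Finset.mul_sum, Finset.sum_product]
    refine Finset.sum_congr rfl fun p _ => ?_
    rw [Finset.mul_sum]
    refine Finset.sum_congr rfl fun q _ => ?_
    ring
  have R : (∑ k ∈ Finset.range (n + 1), (n.choose k : ℂ) *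
          (∑ i ∈ Finset.range (k + 1), (k.choose i : ℂ) * f i (k - i) x) *
          (∑ j ∈ Finset.range (n - k + 1), ((n - k).choose j : ℂ) * f j (n - k - j) y)) =
      ∑ s ∈ (Finset.range (n+1)).sigma
        (fun k => Finset.range (k+1) ×ˢ Finset.range (n-k+1)),
        (n.choose s.1 : ℂ) * (s.1.choose s.2.1) * ((n-s.1).choose s.2.2) *
          f s.2.1 (s.1 - s.2.1) x * f s.2.2 (n - s.1 - s.2.2) y := by
    rw [Finset.sum_sigma]
    refine Finset.sum_congr rfl fun k _ => ?_
    rw [mul_assoc, Finset.sum_mul_sum, Finset.mul_sum, Finset.sum_product]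
    refine Finset.sum_congr rfl fun p _ => ?_
    rw [Finset.mul_sum]
    refine Finset.sum_congr rfl fun q _ => ?_
    ring
  rw [L, R]
  refine Finset.sum_nbij' (fun s => ⟨s.2.1 + s.2.2, (s.2.1, s.1 - s.2.1)⟩)
    (fun s => ⟨s.2.1 + s.2.2, (s.2.1, s.1 - s.2.1)⟩) ?_ ?_ ?_ ?_ ?_
  · rintro ⟨k, p, q⟩ hs
    simp only [Finset.mem_sigma, Finset.mem_product, Finset.mem_range] at hs ⊢
    omega
  · rintro ⟨k, p, q⟩ hs
    simp only [Finset.mem_sigma, Finset.mem_product, Finset.mem_range] at hs ⊢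
    omega
  · rintro ⟨k, p, q⟩ hs
    simp only [Finset.mem_sigma, Finset.mem_product, Finset.mem_range] at hs
    simp only [Sigma.mk.inj_iff, Prod.mk.injEq]
    refine ⟨by omega, heq_of_eq (by simp)⟩
  · rintro ⟨k, p, q⟩ hs
    simp only [Finset.mem_sigma, Finset.mem_product, Finset.mem_range] at hs
    simp only [Sigma.mk.inj_iff, Prod.mk.injEq]
    refine ⟨by omega, heq_of_eq (by simp)⟩
  · rintro ⟨k, p, q⟩ hs
    simp only [Finset.mem_sigma, Finset.mem_product, Finset.mem_range] at hs
    have hk : k ≤ n := by omega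
    have hp : p ≤ k := by omega
    have hq : q ≤ n - k := by omega
    simp only
    rw [coeff_main hk hp hq]
    have e1 : p + q - p = q := by omega
    have e2 : n - (p + q) - (k - p) = n - k - q := by omega
    rw [e1, e2]
end

section
/- Let (f_α)_{α ∈ ℕ^r} be a generalized moment sequence of rank r on an abelian group G with f_0 = m an exponential. Then for every α ∈ ℕ^r and all y₁,...,y_{|α|+1}, x ∈ G, the modified difference identity Δ_{m; y₁,...,y_{|α|+1}} * f_α = 0 holds; that is, f_α is a generalized exponential monomial of degree at most |α| corresponding to m. -/
/-- The modified difference operator `Δ_{m;y}`. -/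
def modDiff {G : Type*} [AddCommGroup G] (m : G → ℂ) (y : G) (f : G → ℂ) : G → ℂ :=
  fun x => f (x + y) - m y * f x

/-- Iterated modified differences `Δ_{m;y₁,...,y_k}` for a list of increments. -/
def modDiffs {G : Type*} [AddCommGroup G] (m : G → ℂ) : List G → (G → ℂ) → (G → ℂ)
  | [], f => f
  | y :: ys, f => modDiff m y (modDiffs m ys f)

section Aux

variable {G : Type*} [AddCommGroup G] (m : G → ℂ)

lemma modDiff_add (y : G) (f g : G → ℂ) :
    modDiff m y (f + g) = modDiff m y f + modDiff m y g := by
  funext x; simp [modDiff]; ring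

lemma modDiff_smul (y : G) (c : ℂ) (f : G → ℂ) :
    modDiff m y (c • f) = c • modDiff m y f := by
  funext x; simp [modDiff]; ring

lemma modDiff_zero (y : G) : modDiff m y (0 : G → ℂ) = 0 := by
  funext x; simp [modDiff]

lemma modDiffs_smul (ys : List G) (c : ℂ) (f : G → ℂ) :
    modDiffs m ys (c • f) = c • modDiffs m ys f := by
  induction ys with
  | nil => rfl
  | cons y ys ih => simp [modDiffs, ih, modDiff_smul]

lemma modDiffs_add (ys : List G) (f g : G → ℂ) :
    modDiffs m ys (f + g) = modDiffs m ys f + modDiffs m ys g := by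
  induction ys with
  | nil => rfl
  | cons y ys ih => simp [modDiffs, ih, modDiff_add]

lemma modDiffs_zero (ys : List G) : modDiffs m ys (0 : G → ℂ) = 0 := by
  induction ys with
  | nil => rfl
  | cons y ys ih => simp [modDiffs, ih, modDiff_zero]

lemma modDiffs_sum {ι : Type*} (ys : List G) (s : Finset ι) (g : ι → G → ℂ) :
    modDiffs m ys (∑ b ∈ s, g b) = ∑ b ∈ s, modDiffs m ys (g b) := by
  classical
  induction s using Finset.induction_on with
  | empty => simp [modDiffs_zero]
  | insert _ _ h ih => rw [Finset.sum_insert h, Finset.sum_insert h, modDiffs_add, ih]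

lemma modDiffs_snoc (ys : List G) (y : G) (f : G → ℂ) :
    modDiffs m (ys ++ [y]) f = modDiffs m ys (modDiff m y f) := by
  induction ys with
  | nil => rfl
  | cons a ys ih => simp [modDiffs, ih]

lemma key_step {r : ℕ} (f : (Fin r → ℕ) → G → ℂ)
    (hf : ∀ (α : Fin r → ℕ) (x y : G),
      f α (x + y) = ∑ β ∈ Finset.Iic α,
        (∏ i, ((α i).choose (β i) : ℂ)) * f β x * f (α - β) y)
    (h0 : f 0 = m) (α : Fin r → ℕ) (y : G) :
    modDiff m y (f α) = ∑ β ∈ (Finset.Iic α).erase α,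
      ((∏ i, ((α i).choose (β i) : ℂ)) * f (α - β) y) • f β := by
  classical
  funext x
  have hα : α ∈ Finset.Iic α := Finset.mem_Iic.mpr le_rfl
  have hsub : α - α = (0 : Fin r → ℕ) := by funext i; simp
  have hmain := hf α x y
  rw [← Finset.add_sum_erase _ _ hα, hsub, h0] at hmain
  simp only [Nat.choose_self, Nat.cast_one, Finset.prod_const_one, one_mul] at hmain
  simp only [modDiff, hmain, Finset.sum_apply, Pi.smul_apply, smul_eq_mul]
  rw [mul_comm (f α x) (m y), add_sub_cancel_left]
  apply Finset.sum_congr rfl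
  intro β _
  ring

end Aux

theorem stmt_10 {G : Type*} [AddCommGroup G] (r : ℕ) (hr : 1 ≤ r)
    (f : (Fin r → ℕ) → G → ℂ) (m : G → ℂ)
    (hf : ∀ (α : Fin r → ℕ) (x y : G),
      f α (x + y) = ∑ β ∈ Finset.Iic α,
        (∏ i, ((α i).choose (β i) : ℂ)) * f β x * f (α - β) y)
    (h0 : f 0 = m) (hm : m ≠ 0) :
    ∀ (α : Fin r → ℕ) (ys : List G), ys.length = (∑ i, α i) + 1 →
      modDiffs m ys (f α) = 0 := by
  classical
  suffices H : ∀ n (α : Fin r → ℕ), (∑ i, α i) = n →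
      ∀ ys : List G, n + 1 ≤ ys.length → modDiffs m ys (f α) = 0 by
    intro α ys hlen
    exact H _ α rfl ys hlen.ge
  intro n
  induction n using Nat.strong_induction_on with
  | _ n IH =>
    intro α hαn ys hlen
    have hne : ys ≠ [] := by
      intro h; subst h; simp at hlen
    obtain ⟨l, y, rfl⟩ : ∃ l y, ys = l ++ [y] :=
      ⟨ys.dropLast, ys.getLast hne, (ys.dropLast_append_getLast hne).symm⟩
    rw [modDiffs_snoc, key_step m f hf h0 α y, modDiffs_sum]
    apply Finset.sum_eq_zero
    intro β hβ
    have hβle : β ≤ α := Finset.mem_Iic.mp (Finset.mem_of_mem_erase hβ)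
    have hβne : β ≠ α := Finset.ne_of_mem_erase hβ
    have hlt : (∑ i, β i) < n := by
      subst hαn
      apply Finset.sum_lt_sum (fun i _ => hβle i)
      obtain ⟨i, hi⟩ := Function.ne_iff.mp hβne
      exact ⟨i, Finset.mem_univ i, lt_of_le_of_ne (hβle i) hi⟩
    have hlen' : (∑ i, β i) + 1 ≤ l.length := by
      have h1 : (l ++ [y]).length = l.length + 1 := by simp
      omega
    rw [modDiffs_smul, IH _ hlt β rfl l hlen', smul_zero]
end

section
/- Let G be an abelian group, m : G → ℂ an exponential, and a₁,...,a_n,... : G → ℂ additive functions (homomorphisms into (ℂ,+)). Define f_n(x) = B_n(a₁(x),...,a_n(x)) m(x), where B_n is the n-th complete Bell polynomial. Then (f_n)_{n∈ℕ} is a generalized moment sequence: f_n(x+y) = Σ_{k=0}^{n} C(n,k) f_k(x) f_{n-k}(y) for all x,y ∈ G. -/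
/-- The `n`-th complete (exponential) Bell polynomial, as a function of the
sequence of variables `t 1, t 2, ...` (the value `t 0` is unused). -/
noncomputable def bell : ℕ → (ℕ → ℂ) → ℂ
  | 0, _ => 1
  | n + 1, t => ∑ i ∈ Finset.range (n + 1),
      (n.choose i : ℂ) * bell (n - i) t * t (i + 1)
decreasing_by omega

lemma tri_sum (n : ℕ) (F : ℕ → ℕ → ℂ) :
    ∑ i ∈ Finset.range (n + 1), ∑ k ∈ Finset.range (n - i + 1), F i k
      = ∑ j ∈ Finset.range (n + 1), ∑ i ∈ Finset.range (j + 1), F i (j - i) := by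
  rw [Finset.sum_sigma', Finset.sum_sigma']
  apply Finset.sum_nbij' (fun p => ⟨p.1 + p.2, p.1⟩) (fun p => ⟨p.2, p.1 - p.2⟩)
  · rintro ⟨i, k⟩ h
    simp only [Finset.mem_sigma, Finset.mem_range] at h ⊢
    omega
  · rintro ⟨j, i⟩ h
    simp only [Finset.mem_sigma, Finset.mem_range] at h ⊢
    omega
  · rintro ⟨i, k⟩ h
    simp only [Finset.mem_sigma, Finset.mem_range] at h
    simp only [Sigma.mk.inj_iff, heq_eq_eq, true_and]
    omega
  · rintro ⟨j, i⟩ h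
    simp only [Finset.mem_sigma, Finset.mem_range] at h
    simp only [Sigma.mk.inj_iff, heq_eq_eq]
    constructor
    · omega
    · trivial
  · rintro ⟨i, k⟩ h
    simp only [Finset.mem_sigma, Finset.mem_range] at h
    simp

lemma tri_swap (n : ℕ) (F : ℕ → ℕ → ℂ) :
    ∑ i ∈ Finset.range (n + 1), ∑ k ∈ Finset.range (n - i + 1), F i k
      = ∑ k ∈ Finset.range (n + 1), ∑ i ∈ Finset.range (n - k + 1), F i k := by
  rw [tri_sum n F, tri_sum n (fun k i => F i k)]
  apply Finset.sum_congr rfl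
  intro j hj
  rw [← Finset.sum_range_reflect (fun i => F i (j - i)) (j + 1)]
  apply Finset.sum_congr rfl
  intro k hk
  simp only [Finset.mem_range] at hk
  congr 1 <;> omega

lemma choose_swap {n i k : ℕ} (h : i + k ≤ n) :
    n.choose i * (n - i).choose k = n.choose k * (n - k).choose i := by
  have h1 := Nat.choose_mul (n := n) (Nat.le_add_right i k)
  have h2 := Nat.choose_mul (n := n) (Nat.le_add_left k i)
  rw [Nat.add_sub_cancel_left] at h1
  rw [Nat.add_sub_cancel] at h2
  rw [← h1, ← h2, Nat.choose_symm_add]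

lemma bell_add (n : ℕ) (s t : ℕ → ℂ) :
    bell n (fun j => s j + t j)
      = ∑ k ∈ Finset.range (n + 1), (n.choose k : ℂ) * bell k s * bell (n - k) t := by
  induction n using Nat.strong_induction_on with
  | _ n ih =>
    match n with
    | 0 => simp [bell]
    | Nat.succ n =>
      rw [bell]
      have expand : ∀ i ∈ Finset.range (n + 1),
          (n.choose i : ℂ) * bell (n - i) (fun j => s j + t j) * (s (i+1) + t (i+1))
          = (∑ k ∈ Finset.range (n - i + 1),
              (n.choose i : ℂ) * ((n-i).choose k : ℂ) * bell k s * bell (n-i-k) t * s (i+1))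
            + (∑ k ∈ Finset.range (n - i + 1),
              (n.choose i : ℂ) * ((n-i).choose k : ℂ) * bell k s * bell (n-i-k) t * t (i+1)) := by
        intro i hi
        rw [ih (n - i) (by simp only [Finset.mem_range] at hi; omega),
          mul_comm ((n.choose i : ℂ)), Finset.sum_mul, Finset.sum_mul,
          ← Finset.sum_add_distrib]
        apply Finset.sum_congr rfl
        intro k hk
        ring
      rw [Finset.sum_congr rfl expand, Finset.sum_add_distrib]
      have rhs_eq : ∑ k ∈ Finset.range (n + 2),
            ((n+1).choose k : ℂ) * bell k s * bell (n + 1 - k) t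
          = (∑ k ∈ Finset.range (n + 2), (n.choose k : ℂ) * bell k s * bell (n + 1 - k) t)
            + ∑ k ∈ Finset.range (n + 2),
                (if k = 0 then (0:ℂ) else (n.choose (k-1) : ℂ)) * bell k s * bell (n+1-k) t := by
        rw [← Finset.sum_add_distrib]
        apply Finset.sum_congr rfl
        intro k _
        match k with
        | 0 => simp
        | Nat.succ k =>
          rw [Nat.choose_succ_succ, if_neg (Nat.succ_ne_zero k)]
          push_cast [Nat.succ_sub_one]
          ring
      rw [rhs_eq]
      have hT : (∑ i ∈ Finset.range (n + 1), ∑ k ∈ Finset.range (n - i + 1),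
            (n.choose i : ℂ) * ((n-i).choose k : ℂ) * bell k s * bell (n-i-k) t * t (i+1))
          = ∑ k ∈ Finset.range (n + 2), (n.choose k : ℂ) * bell k s * bell (n + 1 - k) t := by
        rw [Finset.sum_range_succ
          (fun k => (n.choose k : ℂ) * bell k s * bell (n + 1 - k) t) (n + 1),
          Nat.choose_succ_self]
        simp only [Nat.cast_zero, zero_mul, add_zero]
        rw [tri_swap n (fun i k =>
          (n.choose i : ℂ) * ((n-i).choose k : ℂ) * bell k s * bell (n-i-k) t * t (i+1))]
        apply Finset.sum_congr rfl
        intro k hk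
        simp only [Finset.mem_range] at hk
        have hk' : n + 1 - k = (n - k) + 1 := by omega
        rw [hk', bell, Finset.mul_sum]
        apply Finset.sum_congr rfl
        intro i hi
        simp only [Finset.mem_range] at hi
        have h1 : n - i - k = n - k - i := by omega
        have h2 : (n.choose i : ℂ) * ((n-i).choose k : ℂ)
            = (n.choose k : ℂ) * ((n-k).choose i : ℂ) := by
          rw [← Nat.cast_mul, ← Nat.cast_mul, choose_swap (by omega)]
        rw [h1]
        linear_combination bell k s * bell (n - k - i) t * t (i+1) * h2
      have hS : (∑ i ∈ Finset.range (n + 1), ∑ k ∈ Finset.range (n - i + 1),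
            (n.choose i : ℂ) * ((n-i).choose k : ℂ) * bell k s * bell (n-i-k) t * s (i+1))
          = ∑ k ∈ Finset.range (n + 2),
              (if k = 0 then (0:ℂ) else (n.choose (k-1) : ℂ)) * bell k s * bell (n+1-k) t := by
        rw [tri_sum n (fun i k =>
          (n.choose i : ℂ) * ((n-i).choose k : ℂ) * bell k s * bell (n-i-k) t * s (i+1))]
        rw [Finset.sum_range_succ' (fun k =>
          (if k = 0 then (0:ℂ) else (n.choose (k-1) : ℂ)) * bell k s * bell (n+1-k) t) (n + 1)]
        simp only [if_pos rfl, if_true, zero_mul, add_zero]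
        apply Finset.sum_congr rfl
        intro j hj
        simp only [Finset.mem_range] at hj
        rw [if_neg (Nat.succ_ne_zero j)]
        simp only [Nat.add_sub_cancel]
        have hj' : n + 1 - (j + 1) = n - j := by omega
        rw [hj', bell, Finset.mul_sum, Finset.sum_mul]
        apply Finset.sum_congr rfl
        intro i hi
        simp only [Finset.mem_range] at hi
        have h1 : n - i - (j - i) = n - j := by omega
        have h2 : (n.choose i : ℂ) * ((n-i).choose (j-i) : ℂ)
            = (n.choose j : ℂ) * (j.choose i : ℂ) := by
          rw [← Nat.cast_mul, ← Nat.cast_mul, Nat.choose_mul (n := n) (by omega : i ≤ j)]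
        rw [h1]
        linear_combination bell (j - i) s * bell (n - j) t * s (i+1) * h2
      rw [hT, hS]
      ring

theorem stmt_14 {G : Type*} [AddCommGroup G]
    (m : G → ℂ) (hm : ∀ x y : G, m (x + y) = m x * m y) (hm0 : m ≠ 0)
    (a : ℕ → G → ℂ) (ha : ∀ j, ∀ x y : G, a j (x + y) = a j x + a j y)
    (f : ℕ → G → ℂ) (hf : ∀ n x, f n x = bell n (fun j => a j x) * m x) :
    ∀ (n : ℕ) (x y : G),
      f n (x + y) = ∑ k ∈ Finset.range (n + 1),
        (n.choose k : ℂ) * f k x * f (n - k) y := by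
  intro n x y
  rw [hf, hm]
  have : (fun j => a j (x + y)) = fun j => a j x + a j y := by
    funext j; exact ha j x y
  rw [this, bell_add, Finset.sum_mul]
  apply Finset.sum_congr rfl
  intro k hk
  rw [hf, hf]
  ring
end

section
/- Let G be an abelian group, r ≥ 1, m : G → ℂ an exponential, and a = (a_μ)_{μ ∈ ℕ^r, μ≠0} a family of additive functions G → ℂ. Define f_α(x) = B_α(a(x)) m(x), where B_α is the multivariate Bell polynomial. Then (f_α)_{α ∈ ℕ^r} is a generalized moment sequence of rank r: f_α(x+y) = Σ_{β ≤ α} (α choose β) f_β(x) f_{α-β}(y) for all x,y ∈ G. -/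
/-- The multivariate (complete exponential) Bell polynomial `B_α`, defined so that
`exp (∑_{μ ≠ 0} x_μ t^μ / μ!) = ∑_α B_α(x) t^α / α!`; explicitly
`B_α(x) = ∑_n (α! / n!) ∑_{μ₁+⋯+μ_n = α, μ_i ≠ 0} ∏_i x_{μ_i} / μ_i!`. -/
noncomputable def mvBell {r : ℕ} (α : Fin r → ℕ) (x : (Fin r → ℕ) → ℂ) : ℂ :=
  ∑ n ∈ Finset.range ((∑ i, α i) + 1),
    ((∏ i, Nat.factorial (α i) : ℕ) : ℂ) / ((Nat.factorial n : ℕ) : ℂ) *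
      ∑ μ ∈ (Fintype.piFinset fun _ : Fin n => Finset.Iic α).filter
          (fun μ => (∑ j, μ j) = α ∧ ∀ j, μ j ≠ 0),
        ∏ j, x (μ j) / ((∏ i, Nat.factorial (μ j i) : ℕ) : ℂ)

section helper
open Finset MvPowerSeries

noncomputable def gps (r : ℕ) (x : (Fin r → ℕ) → ℂ) : MvPowerSeries (Fin r) ℂ :=
  fun d => if d = 0 then 0 else x ⇑d / ((∏ i, Nat.factorial (d i) : ℕ) : ℂ)

lemma coeff_gps (r : ℕ) (x : (Fin r → ℕ) → ℂ) (d : Fin r →₀ ℕ) :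
    MvPowerSeries.coeff d (gps r x)
      = if d = 0 then 0 else x ⇑d / ((∏ i, Nat.factorial (d i) : ℕ) : ℂ) := rfl

lemma coe_symm {ι M : Type*} [Finite ι] [Zero M] (g : ι → M) :
    ⇑(Finsupp.equivFunOnFinite.symm g) = g :=
  Finsupp.equivFunOnFinite.apply_symm_apply g

lemma coeff_gps_pow (r : ℕ) (x : (Fin r → ℕ) → ℂ) (n : ℕ) (d : Fin r →₀ ℕ) :
    MvPowerSeries.coeff d ((gps r x) ^ n)
      = ∑ μ ∈ (Fintype.piFinset fun _ : Fin n => Finset.Iic ⇑d).filter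
          (fun μ => (∑ j, μ j) = ⇑d ∧ ∀ j, μ j ≠ 0),
        ∏ j, x (μ j) / ((∏ i, Nat.factorial (μ j i) : ℕ) : ℂ) := by
  have h1 : (gps r x) ^ n = ∏ _j ∈ (univ : Finset (Fin n)), gps r x := by
    simp
  rw [h1, MvPowerSeries.coeff_prod]
  rw [← Finset.sum_filter_of_ne (p := fun l : Fin n →₀ (Fin r →₀ ℕ) => ∀ j, l j ≠ 0)
    (by
      intro l _ hne j
      intro h0
      exact hne (Finset.prod_eq_zero (Finset.mem_univ j) (by rw [coeff_gps, if_pos h0])))]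
  refine Finset.sum_nbij' (fun l => fun j => ⇑(l j))
    (fun μ => Finsupp.equivFunOnFinite.symm (fun j => Finsupp.equivFunOnFinite.symm (μ j)))
    ?_ ?_ ?_ ?_ ?_
  · intro l hl
    simp only [Finset.mem_filter, Finset.mem_finsuppAntidiag] at hl
    obtain ⟨⟨hsum, -⟩, hne⟩ := hl
    have hcoe : (∑ j, ⇑(l j)) = ⇑d := by
      rw [← Finsupp.coe_finset_sum]; exact congrArg _ hsum
    refine Finset.mem_filter.mpr ⟨?_, hcoe, fun j h => hne j (Finsupp.coe_eq_zero.mp h)⟩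
    refine Fintype.mem_piFinset.mpr fun j => Finset.mem_Iic.mpr ?_
    intro i
    calc (l j) i ≤ ∑ k, (l k) i :=
          Finset.single_le_sum (f := fun k => (l k : Fin r → ℕ) i)
            (fun _ _ => Nat.zero_le _) (Finset.mem_univ j)
      _ = (∑ k, ⇑(l k)) i := by simp
      _ = d i := by rw [hcoe]
  · intro μ hμ
    simp only [Finset.mem_filter, Fintype.mem_piFinset] at hμ
    obtain ⟨-, hsum, hne⟩ := hμ
    have h1 : ∀ j : Fin n, (Finsupp.equivFunOnFinite.symm
        (fun j => Finsupp.equivFunOnFinite.symm (μ j))) j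
        = Finsupp.equivFunOnFinite.symm (μ j) := fun j => congrFun (coe_symm _) j
    refine Finset.mem_filter.mpr ⟨Finset.mem_finsuppAntidiag.mpr ⟨?_, Finset.subset_univ _⟩,
      fun j h => hne j (by
        rw [h1 j] at h
        have h2 := congrArg (fun t : Fin r →₀ ℕ => ⇑t) h
        simpa [coe_symm] using h2)⟩
    · have h3 : (univ : Finset (Fin n)).sum
          ⇑(Finsupp.equivFunOnFinite.symm (fun j => Finsupp.equivFunOnFinite.symm (μ j)))
          = ∑ j, Finsupp.equivFunOnFinite.symm (μ j) :=
        Finset.sum_congr rfl fun j _ => h1 j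
      rw [h3]
      apply DFunLike.coe_injective
      rw [Finsupp.coe_finset_sum]
      calc (∑ j, ⇑(Finsupp.equivFunOnFinite.symm (μ j)))
          = ∑ j, μ j := Finset.sum_congr rfl fun j _ => coe_symm _
        _ = ⇑d := hsum
  · intro l _
    dsimp only
    have h1 : (fun j => Finsupp.equivFunOnFinite.symm ⇑(l j)) = fun j => l j :=
      funext fun j => Finsupp.equivFunOnFinite_symm_coe _
    rw [h1]
    exact Finsupp.equivFunOnFinite_symm_coe l
  · intro μ _
    funext j
    rw [congrFun (coe_symm (fun j => Finsupp.equivFunOnFinite.symm (μ j))) j, coe_symm]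
  · intro l hl
    simp only [Finset.mem_filter] at hl
    refine Finset.prod_congr rfl fun j _ => ?_
    rw [coeff_gps, if_neg (hl.2 j)]

lemma coeff_gps_pow_eq_zero (r : ℕ) (x : (Fin r → ℕ) → ℂ) {n : ℕ} {d : Fin r →₀ ℕ}
    (h : (∑ i, d i) < n) : MvPowerSeries.coeff d ((gps r x) ^ n) = 0 := by
  rw [coeff_gps_pow]
  rw [Finset.filter_false_of_mem, Finset.sum_empty]
  intro μ _ hμ
  obtain ⟨hsum, hne⟩ := hμ
  have hle : n ≤ ∑ i, d i := by
    calc n = ∑ _j : Fin n, 1 := by simp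
      _ ≤ ∑ j, (∑ i, μ j i) := by
          refine Finset.sum_le_sum fun j _ => ?_
          have hnz : (∑ i, μ j i) ≠ 0 := by
            intro h0
            exact hne j (funext fun i => by
              have := Finset.sum_eq_zero_iff.mp h0 i (Finset.mem_univ i)
              simpa using this)
          rcases Finset.exists_ne_zero_of_sum_ne_zero hnz with ⟨i, -, hi⟩
          exact (Nat.one_le_iff_ne_zero.mpr hi).trans
            (Finset.single_le_sum (fun _ _ => Nat.zero_le _) (Finset.mem_univ i))
      _ = ∑ i, ∑ j, μ j i := Finset.sum_comm
      _ = ∑ i, d i := by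
          refine Finset.sum_congr rfl fun i _ => ?_
          rw [← Finset.sum_apply i Finset.univ μ]
          rw [hsum]
  omega

lemma mvBell_eq {r : ℕ} (α : Fin r → ℕ) (x : (Fin r → ℕ) → ℂ) (N : ℕ)
    (hN : (∑ i, α i) < N) :
    mvBell α x = ((∏ i, Nat.factorial (α i) : ℕ) : ℂ) *
      ∑ n ∈ Finset.range N, ((Nat.factorial n : ℕ) : ℂ)⁻¹ *
        MvPowerSeries.coeff (Finsupp.equivFunOnFinite.symm α) ((gps r x) ^ n) := by
  have hd : ∑ i, (Finsupp.equivFunOnFinite.symm α) i = ∑ i, α i := by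
    refine Finset.sum_congr rfl fun i _ => by rw [coe_symm]
  have key : ∀ n, MvPowerSeries.coeff (Finsupp.equivFunOnFinite.symm α) ((gps r x) ^ n)
      = ∑ μ ∈ (Fintype.piFinset fun _ : Fin n => Finset.Iic α).filter
          (fun μ => (∑ j, μ j) = α ∧ ∀ j, μ j ≠ 0),
        ∏ j, x (μ j) / ((∏ i, Nat.factorial (μ j i) : ℕ) : ℂ) := by
    intro n
    rw [coeff_gps_pow, coe_symm]
  calc mvBell α x
      = ∑ n ∈ Finset.range ((∑ i, α i) + 1),
          ((∏ i, Nat.factorial (α i) : ℕ) : ℂ) * (((Nat.factorial n : ℕ) : ℂ)⁻¹ *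
            MvPowerSeries.coeff (Finsupp.equivFunOnFinite.symm α) ((gps r x) ^ n)) := by
        refine Finset.sum_congr rfl fun n _ => ?_
        rw [key, div_eq_mul_inv, mul_assoc]
    _ = ∑ n ∈ Finset.range N,
          ((∏ i, Nat.factorial (α i) : ℕ) : ℂ) * (((Nat.factorial n : ℕ) : ℂ)⁻¹ *
            MvPowerSeries.coeff (Finsupp.equivFunOnFinite.symm α) ((gps r x) ^ n)) := by
        refine Finset.sum_subset (Finset.range_subset_range.mpr (by omega)) ?_
        intro n _ hn
        rw [Finset.mem_range, not_lt] at hn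
        rw [coeff_gps_pow_eq_zero r x (by omega : (∑ i, (Finsupp.equivFunOnFinite.symm α) i) < n)]
        ring
    _ = _ := by rw [Finset.mul_sum]

lemma gps_add (r : ℕ) (x y : (Fin r → ℕ) → ℂ) :
    gps r (fun μ => x μ + y μ) = gps r x + gps r y := by
  funext d
  show (if d = 0 then 0 else (x ⇑d + y ⇑d) / _) = ((gps r x) d + (gps r y) d)
  show _ = (if d = 0 then (0:ℂ) else _) + (if d = 0 then (0:ℂ) else _)
  split
  · ring
  · rw [add_div]

lemma sum_tri (N : ℕ) (F : ℕ → ℕ → ℂ) (hF : ∀ k m, N ≤ k + m → F k m = 0) :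
    ∑ n ∈ Finset.range N, ∑ k ∈ Finset.range (n + 1), F k (n - k)
      = ∑ k ∈ Finset.range N, ∑ m ∈ Finset.range N, F k m := by
  rw [Finset.sum_sigma', ← Finset.sum_product']
  rw [← Finset.sum_filter_of_ne (p := fun p : ℕ × ℕ => p.1 + p.2 < N)
    (fun p _ hne => by by_contra h; exact hne (hF p.1 p.2 (by omega)))]
  refine Finset.sum_nbij' (fun p => (p.2, p.1 - p.2)) (fun p => ⟨p.1 + p.2, p.1⟩) ?_ ?_ ?_ ?_ ?_
  · intro p hp
    simp only [Finset.mem_sigma, Finset.mem_range] at hp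
    simp only [Finset.mem_filter, Finset.mem_product, Finset.mem_range]
    omega
  · intro p hp
    simp only [Finset.mem_filter, Finset.mem_product, Finset.mem_range] at hp
    simp only [Finset.mem_sigma, Finset.mem_range]
    omega
  · intro p hp
    simp only [Finset.mem_sigma, Finset.mem_range] at hp
    have h2 : p.2 + (p.1 - p.2) = p.1 := by omega
    exact Sigma.ext h2 HEq.rfl
  · intro p hp
    simp only [Finset.mem_filter, Finset.mem_product, Finset.mem_range] at hp
    have : p.1 + p.2 - p.1 = p.2 := by omega
    exact Prod.ext rfl this
  · intro p _
    rfl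

lemma hfac {n k : ℕ} (h : k ≤ n) :
    ((n.factorial : ℂ))⁻¹ * (n.choose k : ℂ)
      = ((k.factorial : ℂ))⁻¹ * (((n - k).factorial : ℂ))⁻¹ := by
  have h1 : ((n.choose k : ℕ) : ℂ) * (k.factorial : ℂ) * ((n - k).factorial : ℂ)
      = (n.factorial : ℂ) := by
    exact_mod_cast congrArg (fun t : ℕ => (t : ℂ))
      (Nat.choose_mul_factorial_mul_factorial h)
  have h2 : ((n.factorial : ℕ) : ℂ) ≠ 0 := Nat.cast_ne_zero.mpr (Nat.factorial_ne_zero n)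
  have h3 : ((k.factorial : ℕ) : ℂ) ≠ 0 := Nat.cast_ne_zero.mpr (Nat.factorial_ne_zero k)
  have h4 : (((n - k).factorial : ℕ) : ℂ) ≠ 0 := Nat.cast_ne_zero.mpr (Nat.factorial_ne_zero _)
  field_simp
  linear_combination h1

lemma sum_mul_swap {ι κ π : Type*} (s : Finset ι) (t : Finset κ) (u : Finset π)
    (A : ι → π → ℂ) (B : κ → π → ℂ) :
    ∑ k ∈ s, ∑ m ∈ t, ∑ p ∈ u, A k p * B m p
      = ∑ p ∈ u, (∑ k ∈ s, A k p) * (∑ m ∈ t, B m p) := by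
  calc ∑ k ∈ s, ∑ m ∈ t, ∑ p ∈ u, A k p * B m p
      = ∑ k ∈ s, ∑ p ∈ u, ∑ m ∈ t, A k p * B m p :=
        Finset.sum_congr rfl fun _ _ => Finset.sum_comm
    _ = ∑ p ∈ u, ∑ k ∈ s, ∑ m ∈ t, A k p * B m p := Finset.sum_comm
    _ = ∑ p ∈ u, (∑ k ∈ s, A k p) * (∑ m ∈ t, B m p) :=
        Finset.sum_congr rfl fun p _ => (Finset.sum_mul_sum _ _ _ _).symm

lemma mvBell_add {r : ℕ} (α : Fin r → ℕ) (x y : (Fin r → ℕ) → ℂ) :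
    mvBell α (fun μ => x μ + y μ)
      = ∑ β ∈ Finset.Iic α,
          (∏ i, ((α i).choose (β i) : ℂ)) * mvBell β x * mvBell (α - β) y := by
  set N := (∑ i, α i) + 1 with hN
  set dα := Finsupp.equivFunOnFinite.symm α with hdα
  have hdcoe : ⇑dα = α := coe_symm α
  have hsum_add : ∀ b c : Fin r →₀ ℕ, b + c = dα →
      (∑ i, b i) + (∑ i, c i) = ∑ i, α i := by
    intro b c h
    have hco : ∀ i, b i + c i = α i := by
      intro i
      have := congrFun (congrArg (fun t : Fin r →₀ ℕ => ⇑t) h) i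
      simpa [hdcoe] using this
    rw [← Finset.sum_add_distrib]
    exact Finset.sum_congr rfl fun i _ => hco i
  have main : ∑ n ∈ Finset.range N, ((n.factorial : ℂ))⁻¹ *
        MvPowerSeries.coeff dα ((gps r x + gps r y) ^ n)
      = ∑ p ∈ Finset.HasAntidiagonal.antidiagonal dα,
          (∑ k ∈ Finset.range N, ((k.factorial : ℂ))⁻¹ *
            MvPowerSeries.coeff p.1 ((gps r x) ^ k)) *
          (∑ m ∈ Finset.range N, ((m.factorial : ℂ))⁻¹ *
            MvPowerSeries.coeff p.2 ((gps r y) ^ m)) := by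
    set F : ℕ → ℕ → ℂ := fun k m => ∑ p ∈ Finset.HasAntidiagonal.antidiagonal dα,
        (((k.factorial : ℂ))⁻¹ * MvPowerSeries.coeff p.1 ((gps r x) ^ k)) *
        (((m.factorial : ℂ))⁻¹ * MvPowerSeries.coeff p.2 ((gps r y) ^ m)) with hF
    have step1 : ∀ n, ((n.factorial : ℂ))⁻¹ *
        MvPowerSeries.coeff dα ((gps r x + gps r y) ^ n)
        = ∑ k ∈ Finset.range (n + 1), F k (n - k) := by
      intro n
      rw [add_pow, map_sum, Finset.mul_sum]
      refine Finset.sum_congr rfl fun k hk => ?_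
      have hkn : k ≤ n := by simpa using Nat.lt_succ_iff.mp (Finset.mem_range.mp hk)
      have hnsmul : (gps r x) ^ k * (gps r y) ^ (n - k) *
          ((n.choose k : ℕ) : MvPowerSeries (Fin r) ℂ)
          = (n.choose k) • ((gps r x) ^ k * (gps r y) ^ (n - k)) := by
        rw [nsmul_eq_mul, mul_comm]
      rw [hnsmul, map_nsmul, nsmul_eq_mul, MvPowerSeries.coeff_mul, hF]
      rw [← mul_assoc, hfac hkn, Finset.mul_sum]
      refine Finset.sum_congr rfl fun p _ => ?_
      ring
    have hFvan : ∀ k m, N ≤ k + m → F k m = 0 := by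
      intro k m hkm
      rw [hF]
      refine Finset.sum_eq_zero fun p hp => ?_
      have hpsum : p.1 + p.2 = dα := Finset.HasAntidiagonal.mem_antidiagonal.mp hp
      have hadd := hsum_add p.1 p.2 hpsum
      rcases (by omega : (∑ i, p.1 i) < k ∨ (∑ i, p.2 i) < m) with hc | hc
      · rw [coeff_gps_pow_eq_zero r x hc]; ring
      · rw [coeff_gps_pow_eq_zero r y hc]; ring
    calc ∑ n ∈ Finset.range N, ((n.factorial : ℂ))⁻¹ *
          MvPowerSeries.coeff dα ((gps r x + gps r y) ^ n)
        = ∑ n ∈ Finset.range N, ∑ k ∈ Finset.range (n + 1), F k (n - k) :=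
          Finset.sum_congr rfl fun n _ => step1 n
      _ = ∑ k ∈ Finset.range N, ∑ m ∈ Finset.range N, F k m := sum_tri N F hFvan
      _ = ∑ p ∈ Finset.HasAntidiagonal.antidiagonal dα,
            (∑ k ∈ Finset.range N, ((k.factorial : ℂ))⁻¹ *
              MvPowerSeries.coeff p.1 ((gps r x) ^ k)) *
            (∑ m ∈ Finset.range N, ((m.factorial : ℂ))⁻¹ *
              MvPowerSeries.coeff p.2 ((gps r y) ^ m)) := by
          rw [hF]
          exact sum_mul_swap (Finset.range N) (Finset.range N) (Finset.HasAntidiagonal.antidiagonal dα)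
            (fun k p => ((k.factorial : ℂ))⁻¹ * MvPowerSeries.coeff p.1 ((gps r x) ^ k))
            (fun m p => ((m.factorial : ℂ))⁻¹ * MvPowerSeries.coeff p.2 ((gps r y) ^ m))
  rw [mvBell_eq α _ N (by omega), gps_add, ← hdα, main, Finset.mul_sum]
  refine Finset.sum_nbij' (fun p : (Fin r →₀ ℕ) × (Fin r →₀ ℕ) => ⇑p.1)
    (fun β => (Finsupp.equivFunOnFinite.symm β, Finsupp.equivFunOnFinite.symm (α - β)))
    ?_ ?_ ?_ ?_ ?_
  · intro p hp
    have hpsum : p.1 + p.2 = dα := Finset.HasAntidiagonal.mem_antidiagonal.mp hp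
    refine Finset.mem_Iic.mpr fun i => ?_
    have := congrFun (congrArg (fun t : Fin r →₀ ℕ => ⇑t) hpsum) i
    simp only [hdcoe, Finsupp.coe_add, Pi.add_apply] at this
    show p.1 i ≤ α i
    omega
  · intro β hβ
    have hβα : β ≤ α := Finset.mem_Iic.mp hβ
    refine Finset.HasAntidiagonal.mem_antidiagonal.mpr ?_
    apply DFunLike.coe_injective
    dsimp only
    rw [Finsupp.coe_add, coe_symm, coe_symm, hdcoe]
    funext i
    simp only [Pi.add_apply, Pi.sub_apply]
    exact Nat.add_sub_cancel' (hβα i)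
  · intro p hp
    have hpsum : p.1 + p.2 = dα := Finset.HasAntidiagonal.mem_antidiagonal.mp hp
    have h2 : α - ⇑p.1 = ⇑p.2 := by
      funext i
      have := congrFun (congrArg (fun t : Fin r →₀ ℕ => ⇑t) hpsum) i
      simp only [hdcoe, Finsupp.coe_add, Pi.add_apply] at this
      simp only [Pi.sub_apply]
      omega
    refine Prod.ext ?_ ?_
    · exact Finsupp.equivFunOnFinite_symm_coe p.1
    · show Finsupp.equivFunOnFinite.symm (α - ⇑p.1) = p.2
      rw [h2]
      exact Finsupp.equivFunOnFinite_symm_coe p.2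
  · intro β _
    exact coe_symm β
  · intro p hp
    have hpsum : p.1 + p.2 = dα := Finset.HasAntidiagonal.mem_antidiagonal.mp hp
    have hb : ⇑p.1 ≤ α := fun i => by
      have := congrFun (congrArg (fun t : Fin r →₀ ℕ => ⇑t) hpsum) i
      simp only [hdcoe, Finsupp.coe_add, Pi.add_apply] at this
      exact Nat.le.intro this
    have h2 : α - ⇑p.1 = ⇑p.2 := by
      funext i
      have := congrFun (congrArg (fun t : Fin r →₀ ℕ => ⇑t) hpsum) i
      simp only [hdcoe, Finsupp.coe_add, Pi.add_apply] at this
      simp only [Pi.sub_apply]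
      omega
    have hadd := hsum_add p.1 p.2 hpsum
    have hb1 : (∑ i, p.1 i) < N := by omega
    have hb2 : (∑ i, p.2 i) < N := by omega
    have e1 : mvBell (⇑p.1) x = ((∏ i, Nat.factorial (p.1 i) : ℕ) : ℂ) *
        ∑ k ∈ Finset.range N, ((k.factorial : ℂ))⁻¹ *
          MvPowerSeries.coeff p.1 ((gps r x) ^ k) := by
      rw [mvBell_eq (⇑p.1) x N (by omega), Finsupp.equivFunOnFinite_symm_coe]
    have e2 : mvBell (α - ⇑p.1) y = ((∏ i, Nat.factorial (p.2 i) : ℕ) : ℂ) *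
        ∑ m ∈ Finset.range N, ((m.factorial : ℂ))⁻¹ *
          MvPowerSeries.coeff p.2 ((gps r y) ^ m) := by
      rw [mvBell_eq (α - ⇑p.1) y N (by rw [h2]; omega), h2,
        Finsupp.equivFunOnFinite_symm_coe]
    rw [e1, e2]
    have hchoose : ((∏ i, Nat.factorial (α i) : ℕ) : ℂ)
        = (∏ i, ((α i).choose (p.1 i) : ℂ)) * ((∏ i, Nat.factorial (p.1 i) : ℕ) : ℂ) *
          ((∏ i, Nat.factorial (p.2 i) : ℕ) : ℂ) := by
      push_cast
      rw [← Finset.prod_mul_distrib, ← Finset.prod_mul_distrib]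
      refine Finset.prod_congr rfl fun i _ => ?_
      have hle : p.1 i ≤ α i := hb i
      have h3 : p.2 i = α i - p.1 i := by
        have := congrFun h2 i
        simp only [Pi.sub_apply] at this
        omega
      rw [h3]
      exact_mod_cast (congrArg (fun t : ℕ => (t : ℂ))
        (Nat.choose_mul_factorial_mul_factorial hle)).symm
    rw [hchoose]
    ring

lemma mvBell_congr {r : ℕ} (α : Fin r → ℕ) {x y : (Fin r → ℕ) → ℂ}
    (h : ∀ μ : Fin r → ℕ, μ ≠ 0 → x μ = y μ) : mvBell α x = mvBell α y := by
  unfold mvBell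
  refine Finset.sum_congr rfl fun n _ => ?_
  congr 1
  refine Finset.sum_congr rfl fun μ hμ => ?_
  have hne := (Finset.mem_filter.mp hμ).2.2
  exact Finset.prod_congr rfl fun j _ => by rw [h _ (hne j)]

end helper

theorem stmt_17 {G : Type*} [AddCommGroup G] (r : ℕ) (hr : 1 ≤ r)
    (m : G → ℂ) (hm : ∀ x y : G, m (x + y) = m x * m y) (hm0 : m ≠ 0)
    (a : (Fin r → ℕ) → G → ℂ)
    (ha : ∀ μ : Fin r → ℕ, μ ≠ 0 → ∀ x y : G, a μ (x + y) = a μ x + a μ y)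
    (f : (Fin r → ℕ) → G → ℂ)
    (hf : ∀ (α : Fin r → ℕ) (x : G), f α x = mvBell α (fun μ => a μ x) * m x) :
    ∀ (α : Fin r → ℕ) (x y : G),
      f α (x + y) = ∑ β ∈ Finset.Iic α,
        (∏ i, ((α i).choose (β i) : ℂ)) * f β x * f (α - β) y := by
  intro α x y
  rw [hf, hm]
  have hcong : mvBell α (fun μ => a μ (x + y)) = mvBell α (fun μ => a μ x + a μ y) :=
    mvBell_congr α (fun μ hμ => ha μ hμ x y)
  rw [hcong, mvBell_add, Finset.sum_mul]
  refine Finset.sum_congr rfl fun β _ => ?_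
  rw [hf, hf]
  ring
end

section
/- Let G be an abelian group, r ≥ 1, and (f_α)_{α ∈ ℕ^r} a generalized moment sequence of rank r with f_0 = m an exponential. Then there exists a family of additive functions a = (a_μ) : G → ℂ (μ nonzero multi-indices in ℕ^r) such that f_α(x) = B_α(a(x)) m(x) for every α ∈ ℕ^r and every x ∈ G, where B_α denotes the multivariate Bell polynomial. -/
namespace Stmt18

variable {r : ℕ}

/-- total degree -/
def deg (α : Fin r → ℕ) : ℕ := ∑ i, α i

/-- factorial of a multi-index, as a complex number -/
noncomputable def fc (α : Fin r → ℕ) : ℂ := ((∏ i, Nat.factorial (α i) : ℕ) : ℂ)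

lemma fc_ne_zero (α : Fin r → ℕ) : fc α ≠ 0 := by
  have h : 0 < ∏ i, Nat.factorial (α i) := Finset.prod_pos fun _ _ => Nat.factorial_pos _
  simp only [fc]
  exact_mod_cast h.ne'

lemma sub_le_self' (α β : Fin r → ℕ) : α - β ≤ α := fun i => Nat.sub_le _ _

lemma deg_add_deg_sub {α β : Fin r → ℕ} (h : β ≤ α) : deg β + deg (α - β) = deg α := by
  rw [deg, deg, deg, ← Finset.sum_add_distrib]
  exact Finset.sum_congr rfl fun i _ => Nat.add_sub_cancel' (h i)

lemma deg_pos {μ : Fin r → ℕ} (h : μ ≠ 0) : 0 < deg μ := by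
  rcases Nat.eq_zero_or_pos (deg μ) with h0 | h0
  · exact absurd (funext fun i => (Finset.sum_eq_zero_iff.mp h0) i (Finset.mem_univ i)) h
  · exact h0

lemma deg_sub_lt {α μ : Fin r → ℕ} (hle : μ ≤ α) (hne : μ ≠ 0) : deg (α - μ) < deg α := by
  have h1 := deg_add_deg_sub hle
  have h2 := deg_pos hne
  omega

lemma eq_of_sub_eq_zero' {α μ : Fin r → ℕ} (hle : μ ≤ α) (h : α - μ = 0) : μ = α := by
  funext i
  have h1 : α i - μ i = 0 := by simpa using congrFun h i
  have h2 : μ i ≤ α i := hle i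
  omega

/-- The recursive building blocks: `C n α x = ∑_{μ₁+⋯+μ_n = α, μ_i ≠ 0} ∏ x_{μ_i}/μ_i!`. -/
noncomputable def C : ℕ → (Fin r → ℕ) → ((Fin r → ℕ) → ℂ) → ℂ
  | 0, α, _ => if α = 0 then 1 else 0
  | n+1, α, x => ∑ μ ∈ (Finset.Iic α).erase 0, x μ / fc μ * C n (α - μ) x

lemma C_zero_succ (n : ℕ) (x : (Fin r → ℕ) → ℂ) : C (n+1) (0 : Fin r → ℕ) x = 0 := by
  rw [C]
  have h : (Finset.Iic (0 : Fin r → ℕ)).erase 0 = ∅ := by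
    ext β
    simp only [Finset.mem_erase, Finset.mem_Iic, Finset.notMem_empty, iff_false, not_and]
    intro h1 h2
    exact h1 (funext fun i => Nat.le_zero.mp (h2 i))
  simp [h]

lemma C_vanish : ∀ (n : ℕ) (α : Fin r → ℕ) (x), deg α < n → C n α x = 0 := by
  intro n
  induction n with
  | zero => intro α x h; omega
  | succ n ih =>
    intro α x h
    rw [C]
    apply Finset.sum_eq_zero
    intro μ hμ
    rw [Finset.mem_erase, Finset.mem_Iic] at hμ
    have : deg (α - μ) < n := by
      have h1 := deg_add_deg_sub hμ.2
      have h2 := deg_pos hμ.1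
      omega
    rw [ih _ x this, mul_zero]

lemma C_congr : ∀ (n : ℕ) (α : Fin r → ℕ) (x y), (∀ μ, μ ≤ α → μ ≠ 0 → x μ = y μ) →
    C n α x = C n α y := by
  intro n
  induction n with
  | zero => intro α x y h; rw [C, C]
  | succ n ih =>
    intro α x y h
    rw [C, C]
    apply Finset.sum_congr rfl
    intro μ hμ
    rw [Finset.mem_erase, Finset.mem_Iic] at hμ
    rw [h μ hμ.2 hμ.1, ih (α - μ) x y fun ν hν hν0 => h ν (hν.trans (sub_le_self' α μ)) hν0]

lemma C_one {α : Fin r → ℕ} (hα : α ≠ 0) (x : (Fin r → ℕ) → ℂ) : C 1 α x = x α / fc α := by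
  rw [C]
  rw [Finset.sum_eq_single α]
  · rw [C]; simp [sub_self]
  · intro μ hμ hne
    rw [Finset.mem_erase, Finset.mem_Iic] at hμ
    rw [C]
    rw [if_neg fun h => hne (eq_of_sub_eq_zero' hμ.2 h), mul_zero]
  · intro h
    exact absurd (by rw [Finset.mem_erase, Finset.mem_Iic]; exact ⟨hα, le_refl α⟩) h

lemma sum_pi_eq_C : ∀ (n : ℕ) (α : Fin r → ℕ) (x : (Fin r → ℕ) → ℂ),
    (∑ μ ∈ (Fintype.piFinset fun _ : Fin n => Finset.Iic α).filter
        (fun μ => (∑ j, μ j) = α ∧ ∀ j, μ j ≠ 0),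
      ∏ j, x (μ j) / fc (μ j)) = C n α x := by
  intro n
  induction n with
  | zero =>
    intro α x
    rw [C]
    rw [Finset.sum_filter]
    simp [eq_comm]
  | succ n ih =>
    intro α x
    rw [C]
    have hrw : ∀ μ0 ∈ (Finset.Iic α).erase 0,
        x μ0 / fc μ0 * C n (α - μ0) x
          = ∑ ν ∈ (Fintype.piFinset fun _ : Fin n => Finset.Iic (α - μ0)).filter
              (fun ν => (∑ j, ν j) = α - μ0 ∧ ∀ j, ν j ≠ 0),
            x μ0 / fc μ0 * ∏ j, x (ν j) / fc (ν j) := by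
      intro μ0 _
      rw [← Finset.mul_sum, ih]
    rw [Finset.sum_congr rfl hrw, Finset.sum_sigma']
    apply Finset.sum_nbij' (i := fun μ => (⟨μ 0, Fin.tail μ⟩ :
        (μ0 : Fin r → ℕ) × (Fin n → Fin r → ℕ)))
      (j := fun p => Fin.cons p.1 p.2)
    · -- forward membership
      intro μ hμ
      rw [Finset.mem_filter, Fintype.mem_piFinset] at hμ
      obtain ⟨hmem, hsum, hne⟩ := hμ
      have h0le : μ 0 ≤ α := Finset.mem_Iic.mp (hmem 0)
      have hs : μ 0 + ∑ j, Fin.tail μ j = α := by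
        rw [← hsum, Fin.sum_univ_succ]; rfl
      have htail : (∑ j, Fin.tail μ j) = α - μ 0 :=
        eq_tsub_of_add_eq (by rw [add_comm]; exact hs)
      rw [Finset.mem_sigma]
      constructor
      · exact Finset.mem_erase.mpr ⟨hne 0, Finset.mem_Iic.mpr h0le⟩
      · rw [Finset.mem_filter, Fintype.mem_piFinset]
        refine ⟨fun j => Finset.mem_Iic.mpr ?_, htail, fun j => hne j.succ⟩
        rw [← htail]
        exact Finset.single_le_sum (f := Fin.tail μ) (fun i _ => by positivity)
          (Finset.mem_univ j)
    · -- backward membership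
      intro p hp
      rw [Finset.mem_sigma] at hp
      obtain ⟨hp1, hp2⟩ := hp
      rw [Finset.mem_erase, Finset.mem_Iic] at hp1
      rw [Finset.mem_filter, Fintype.mem_piFinset] at hp2
      obtain ⟨hmem, hsum, hne⟩ := hp2
      rw [Finset.mem_filter, Fintype.mem_piFinset]
      refine ⟨fun j => ?_, ?_, fun j => ?_⟩
      · refine Fin.cases ?_ ?_ j
        · rw [Fin.cons_zero]; exact Finset.mem_Iic.mpr hp1.2
        · intro i
          rw [Fin.cons_succ]
          exact Finset.mem_Iic.mpr ((Finset.mem_Iic.mp (hmem i)).trans (sub_le_self' α p.1))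
      · rw [Fin.sum_cons, hsum]
        exact add_tsub_cancel_of_le hp1.2
      · refine Fin.cases ?_ ?_ j
        · rw [Fin.cons_zero]; exact hp1.1
        · intro i; rw [Fin.cons_succ]; exact hne i
    · intro μ _; exact Fin.cons_self_tail μ
    · intro p _; simp
    · intro μ _
      rw [Fin.prod_univ_succ]
      rfl

lemma mvBell_eq (α : Fin r → ℕ) (x : (Fin r → ℕ) → ℂ) :
    mvBell α x = ∑ n ∈ Finset.range (deg α + 1), fc α / ((Nat.factorial n : ℕ) : ℂ) * C n α x := by
  unfold mvBell
  exact Finset.sum_congr rfl fun n _ => by rw [← sum_pi_eq_C]; rfl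

lemma pi_add_sub_cancel {μ β : Fin r → ℕ} (h : μ ≤ β) : μ + (β - μ) = β :=
  funext fun i => show μ i + (β i - μ i) = β i by have h' : μ i ≤ β i := h i; omega

lemma pi_add_sub_cancel_left (μ β' : Fin r → ℕ) : μ + β' - μ = β' :=
  funext fun i => show μ i + β' i - μ i = β' i by omega

lemma pi_sub_sub (α μ β : Fin r → ℕ) : α - μ - β = α - β - μ :=
  funext fun i => show α i - μ i - β i = α i - β i - μ i by omega

lemma pi_sub_sub_cancel {α μ β : Fin r → ℕ} (h : μ ≤ β) : (α - μ) - (β - μ) = α - β :=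
  funext fun i => show α i - μ i - (β i - μ i) = α i - β i by have h' : μ i ≤ β i := h i; omega

lemma pi_le_add_le {α μ β' : Fin r → ℕ} (h1 : μ ≤ α) (h2 : β' ≤ α - μ) : μ + β' ≤ α :=
  fun i => by
    have h1' : μ i ≤ α i := h1 i
    have h2' : β' i ≤ α i - μ i := h2 i
    show μ i + β' i ≤ α i
    omega

lemma pi_le_sub_swap {α μ β' : Fin r → ℕ} (h1 : μ ≤ α) (h2 : β' ≤ α - μ) : μ ≤ α - β' :=
  fun i => by
    have h1' : μ i ≤ α i := h1 i
    have h2' : β' i ≤ α i - μ i := h2 i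
    show μ i ≤ α i - β' i
    omega

lemma pi_le_self_add (μ β' : Fin r → ℕ) : μ ≤ μ + β' := fun i => Nat.le_add_right _ _

lemma pi_sub_le_sub {α β μ : Fin r → ℕ} (h : β ≤ α) : β - μ ≤ α - μ :=
  fun i => by have h' : β i ≤ α i := h i; show β i - μ i ≤ α i - μ i; omega

lemma sum_pair₁ (α : Fin r → ℕ) (F : (Fin r → ℕ) → (Fin r → ℕ) → ℂ) :
    ∑ μ ∈ (Finset.Iic α).erase 0, ∑ β ∈ Finset.Iic (α - μ), F μ β
      = ∑ β ∈ Finset.Iic α, ∑ μ ∈ (Finset.Iic β).erase 0, F μ (β - μ) := by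
  rw [Finset.sum_sigma', Finset.sum_sigma']
  apply Finset.sum_nbij' (i := fun p => (⟨p.1 + p.2, p.1⟩ : (β : Fin r → ℕ) × (Fin r → ℕ)))
    (j := fun q => (⟨q.2, q.1 - q.2⟩ : (μ : Fin r → ℕ) × (Fin r → ℕ)))
  · intro p hp
    rw [Finset.mem_sigma, Finset.mem_erase, Finset.mem_Iic, Finset.mem_Iic] at hp
    rw [Finset.mem_sigma, Finset.mem_erase, Finset.mem_Iic, Finset.mem_Iic]
    exact ⟨pi_le_add_le hp.1.2 hp.2, hp.1.1, pi_le_self_add _ _⟩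
  · intro q hq
    rw [Finset.mem_sigma, Finset.mem_erase, Finset.mem_Iic, Finset.mem_Iic] at hq
    rw [Finset.mem_sigma, Finset.mem_erase, Finset.mem_Iic, Finset.mem_Iic]
    exact ⟨⟨hq.2.1, hq.2.2.trans hq.1⟩, pi_sub_le_sub hq.1⟩
  · rintro ⟨μ, β'⟩ _
    show (⟨μ, μ + β' - μ⟩ : (μ : Fin r → ℕ) × (Fin r → ℕ)) = ⟨μ, β'⟩
    rw [pi_add_sub_cancel_left]
  · rintro ⟨β, μ⟩ hq
    rw [Finset.mem_sigma, Finset.mem_erase, Finset.mem_Iic, Finset.mem_Iic] at hq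
    show (⟨μ + (β - μ), μ⟩ : (β : Fin r → ℕ) × (Fin r → ℕ)) = ⟨β, μ⟩
    rw [pi_add_sub_cancel hq.2.2]
  · rintro ⟨μ, β'⟩ _
    show F μ β' = F μ (μ + β' - μ)
    rw [pi_add_sub_cancel_left]

lemma sum_pair₂ (α : Fin r → ℕ) (F : (Fin r → ℕ) → (Fin r → ℕ) → ℂ) :
    ∑ μ ∈ (Finset.Iic α).erase 0, ∑ β ∈ Finset.Iic (α - μ), F μ β
      = ∑ β ∈ Finset.Iic α, ∑ μ ∈ (Finset.Iic (α - β)).erase 0, F μ β := by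
  rw [Finset.sum_sigma', Finset.sum_sigma']
  apply Finset.sum_nbij' (i := fun p => (⟨p.2, p.1⟩ : (β : Fin r → ℕ) × (Fin r → ℕ)))
    (j := fun q => (⟨q.2, q.1⟩ : (μ : Fin r → ℕ) × (Fin r → ℕ)))
  · intro p hp
    rw [Finset.mem_sigma, Finset.mem_erase, Finset.mem_Iic, Finset.mem_Iic] at hp
    rw [Finset.mem_sigma, Finset.mem_erase, Finset.mem_Iic, Finset.mem_Iic]
    exact ⟨hp.2.trans (sub_le_self' _ _), hp.1.1, pi_le_sub_swap hp.1.2 hp.2⟩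
  · intro q hq
    rw [Finset.mem_sigma, Finset.mem_erase, Finset.mem_Iic, Finset.mem_Iic] at hq
    rw [Finset.mem_sigma, Finset.mem_erase, Finset.mem_Iic, Finset.mem_Iic]
    exact ⟨⟨hq.2.1, hq.2.2.trans (sub_le_self' _ _)⟩, pi_le_sub_swap hq.1 hq.2.2⟩
  · intro p _; rfl
  · intro q _; rfl
  · intro p _; rfl

lemma pascal_sum (n : ℕ) (A B : ℕ → ℂ) :
    (∑ k ∈ Finset.range (n+1), ((n.choose k : ℕ) : ℂ) * A (k+1) * B (n-k))
    + (∑ k ∈ Finset.range (n+1), ((n.choose k : ℕ) : ℂ) * A k * B (n+1-k))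
    = ∑ k ∈ Finset.range (n+2), (((n+1).choose k : ℕ) : ℂ) * A k * B (n+1-k) := by
  set g : ℕ → ℂ := fun k => ((n.choose k : ℕ) : ℂ) * A k * B (n+1-k) with hg
  have h1 : ∑ k ∈ Finset.range (n+2), (((n+1).choose k : ℕ) : ℂ) * A k * B (n+1-k)
      = (∑ k ∈ Finset.range (n+1), (((n+1).choose (k+1) : ℕ) : ℂ) * A (k+1) * B (n-k))
        + g 0 := by
    rw [Finset.sum_range_succ']
    congr 1
    · apply Finset.sum_congr rfl
      intro k hk
      have : n + 1 - (k + 1) = n - k := by omega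
      rw [this]
    · simp [hg]
  have h2 : ∀ k, (((n+1).choose (k+1) : ℕ) : ℂ) = ((n.choose k : ℕ) : ℂ) + ((n.choose (k+1) : ℕ) : ℂ) := by
    intro k
    rw [Nat.choose_succ_succ]
    push_cast
    ring
  have h3 : (∑ k ∈ Finset.range (n+1), ((n.choose (k+1) : ℕ) : ℂ) * A (k+1) * B (n-k))
      = ∑ k ∈ Finset.range (n+1), g (k+1) := by
    apply Finset.sum_congr rfl
    intro k hk
    simp only [hg]
    have : n + 1 - (k + 1) = n - k := by omega
    rw [this]
  have h4 : ∑ k ∈ Finset.range (n+1), g (k+1) + g 0 = ∑ k ∈ Finset.range (n+1), g k + g (n+1) := by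
    rw [← Finset.sum_range_succ', Finset.sum_range_succ]
  have h5 : g (n+1) = 0 := by
    simp only [hg, Nat.choose_succ_self, Nat.cast_zero, zero_mul]
  rw [h1]
  have hsplit : ∀ k ∈ Finset.range (n+1),
      (((n+1).choose (k+1) : ℕ) : ℂ) * A (k+1) * B (n-k)
        = ((n.choose k : ℕ) : ℂ) * A (k+1) * B (n-k)
          + ((n.choose (k+1) : ℕ) : ℂ) * A (k+1) * B (n-k) := by
    intro k _
    rw [h2]; ring
  rw [Finset.sum_congr rfl hsplit, Finset.sum_add_distrib, h3]
  have h6 : ∑ k ∈ Finset.range (n+1), g (k+1) = ∑ k ∈ Finset.range (n+1), g k + g (n+1) - g 0 := by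
    rw [← h4]; ring
  rw [h6, h5]
  simp only [hg]
  ring

lemma Iic_zero : (Finset.Iic (0 : Fin r → ℕ)) = {0} := by
  ext β
  simp only [Finset.mem_Iic, Finset.mem_singleton]
  exact ⟨fun h => funext fun i => Nat.le_zero.mp (h i), fun h => h ▸ le_refl _⟩

lemma pi_sub_zero (α : Fin r → ℕ) : α - 0 = α :=
  funext fun i => show α i - 0 = α i by omega

lemma C_bin : ∀ (n : ℕ) (α : Fin r → ℕ) (u v : (Fin r → ℕ) → ℂ),
    C n α (fun μ => u μ + v μ)
      = ∑ β ∈ Finset.Iic α, ∑ k ∈ Finset.range (n+1),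
          ((n.choose k : ℕ) : ℂ) * C k β u * C (n - k) (α - β) v := by
  intro n
  induction n with
  | zero =>
    intro α u v
    rw [C]
    by_cases hα : α = 0
    · subst hα
      rw [Iic_zero]
      simp [C, pi_sub_zero]
    · rw [if_neg hα]
      symm
      apply Finset.sum_eq_zero
      intro β hβ
      rw [Finset.mem_Iic] at hβ
      apply Finset.sum_eq_zero
      intro k hk
      rw [Finset.mem_range] at hk
      have hk0 : k = 0 := by omega
      subst hk0
      by_cases hβ0 : β = 0
      · subst hβ0
        rw [pi_sub_zero]
        rw [C, C, if_neg hα]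
        simp
      · rw [C, if_neg hβ0]
        simp
  | succ n ih =>
    intro α u v
    rw [C]
    have expand : ∀ μ1 ∈ (Finset.Iic α).erase 0,
        (fun μ => u μ + v μ) μ1 / fc μ1 * C n (α - μ1) (fun μ => u μ + v μ)
          = (∑ β ∈ Finset.Iic (α - μ1), ∑ k ∈ Finset.range (n+1),
               u μ1 / fc μ1 * (((n.choose k : ℕ):ℂ) * C k β u * C (n-k) (α - μ1 - β) v))
          + (∑ β ∈ Finset.Iic (α - μ1), ∑ k ∈ Finset.range (n+1),
               v μ1 / fc μ1 * (((n.choose k : ℕ):ℂ) * C k β u * C (n-k) (α - μ1 - β) v)) := by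
      intro μ1 _
      simp only []
      rw [ih, add_div, add_mul, Finset.mul_sum, Finset.mul_sum]
      congr 1 <;> exact Finset.sum_congr rfl fun β _ => by rw [Finset.mul_sum]
    rw [Finset.sum_congr rfl expand, Finset.sum_add_distrib]
    rw [sum_pair₁ α (fun μ1 β => ∑ k ∈ Finset.range (n+1),
        u μ1 / fc μ1 * (((n.choose k : ℕ):ℂ) * C k β u * C (n-k) (α - μ1 - β) v))]
    rw [sum_pair₂ α (fun μ1 β => ∑ k ∈ Finset.range (n+1),
        v μ1 / fc μ1 * (((n.choose k : ℕ):ℂ) * C k β u * C (n-k) (α - μ1 - β) v))]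
    rw [← Finset.sum_add_distrib]
    apply Finset.sum_congr rfl
    intro β hβ
    rw [Finset.mem_Iic] at hβ
    -- u part for fixed β
    have hu : ∑ μ1 ∈ (Finset.Iic β).erase 0, ∑ k ∈ Finset.range (n+1),
        u μ1 / fc μ1 * (((n.choose k : ℕ):ℂ) * C k (β - μ1) u * C (n-k) (α - μ1 - (β - μ1)) v)
        = ∑ k ∈ Finset.range (n+1),
            ((n.choose k : ℕ):ℂ) * C (k+1) β u * C (n-k) (α - β) v := by
      rw [Finset.sum_comm]
      apply Finset.sum_congr rfl
      intro k _
      have hterm : ∀ μ1 ∈ (Finset.Iic β).erase 0,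
          u μ1 / fc μ1 * (((n.choose k : ℕ):ℂ) * C k (β - μ1) u * C (n-k) (α - μ1 - (β - μ1)) v)
          = ((n.choose k : ℕ):ℂ) * (u μ1 / fc μ1 * C k (β - μ1) u) * C (n-k) (α - β) v := by
        intro μ1 hμ1
        rw [Finset.mem_erase, Finset.mem_Iic] at hμ1
        rw [show α - μ1 - (β - μ1) = α - β from by
          rw [pi_sub_sub_cancel hμ1.2]]
        ring
      rw [Finset.sum_congr rfl hterm]
      rw [← Finset.sum_mul, ← Finset.mul_sum, ← C]
    -- v part for fixed β
    have hv : ∑ μ1 ∈ (Finset.Iic (α - β)).erase 0, ∑ k ∈ Finset.range (n+1),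
        v μ1 / fc μ1 * (((n.choose k : ℕ):ℂ) * C k β u * C (n-k) (α - μ1 - β) v)
        = ∑ k ∈ Finset.range (n+1),
            ((n.choose k : ℕ):ℂ) * C k β u * C (n-k+1) (α - β) v := by
      rw [Finset.sum_comm]
      apply Finset.sum_congr rfl
      intro k _
      have hterm : ∀ μ1 ∈ (Finset.Iic (α - β)).erase 0,
          v μ1 / fc μ1 * (((n.choose k : ℕ):ℂ) * C k β u * C (n-k) (α - μ1 - β) v)
          = ((n.choose k : ℕ):ℂ) * C k β u * (v μ1 / fc μ1 * C (n-k) (α - β - μ1) v) := by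
        intro μ1 _
        rw [pi_sub_sub]
        ring
      rw [Finset.sum_congr rfl hterm]
      rw [← Finset.mul_sum, ← C]
    rw [hu, hv]
    have hshift : ∑ k ∈ Finset.range (n+1),
        ((n.choose k : ℕ):ℂ) * C k β u * C (n-k+1) (α - β) v
        = ∑ k ∈ Finset.range (n+1),
            ((n.choose k : ℕ):ℂ) * C k β u * C (n+1-k) (α - β) v := by
      apply Finset.sum_congr rfl
      intro k hk
      rw [Finset.mem_range] at hk
      rw [show n - k + 1 = n + 1 - k from by omega]
    rw [hshift]
    exact pascal_sum n (fun k => C k β u) (fun j => C j (α - β) v)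

lemma fc_mul {α β : Fin r → ℕ} (hβ : β ≤ α) :
    fc α = (∏ i, ((α i).choose (β i) : ℂ)) * fc β * fc (α - β) := by
  have hnat : (∏ i, Nat.factorial (α i))
      = (∏ i, (α i).choose (β i)) * (∏ i, Nat.factorial (β i)) * (∏ i, Nat.factorial ((α - β) i)) := by
    rw [← Finset.prod_mul_distrib, ← Finset.prod_mul_distrib]
    apply Finset.prod_congr rfl
    intro i _
    exact (Nat.choose_mul_factorial_mul_factorial (hβ i)).symm
  simp only [fc]
  rw [hnat]
  push_cast
  ring

lemma coeff_eq {α β : Fin r → ℕ} (hβ : β ≤ α) (k m : ℕ) :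
    fc α / ((Nat.factorial (k+m) : ℕ) : ℂ) * (((k+m).choose k : ℕ) : ℂ)
    = (∏ i, ((α i).choose (β i) : ℂ)) * (fc β / ((Nat.factorial k : ℕ) : ℂ))
        * (fc (α-β) / ((Nat.factorial m : ℕ) : ℂ)) := by
  have hnat : (k+m).choose k * Nat.factorial k * Nat.factorial m = Nat.factorial (k+m) := by
    have h := Nat.choose_mul_factorial_mul_factorial (Nat.le_add_right k m)
    rwa [Nat.add_sub_cancel_left] at h
  rw [fc_mul hβ]
  have h1 : ((Nat.factorial k : ℕ) : ℂ) ≠ 0 := Nat.cast_ne_zero.mpr (Nat.factorial_ne_zero k)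
  have h2 : ((Nat.factorial m : ℕ) : ℂ) ≠ 0 := Nat.cast_ne_zero.mpr (Nat.factorial_ne_zero m)
  have h3 : ((Nat.factorial (k+m) : ℕ) : ℂ) ≠ 0 := Nat.cast_ne_zero.mpr (Nat.factorial_ne_zero _)
  field_simp
  rw [← hnat]
  push_cast
  ring

lemma mvBell_bin (α : Fin r → ℕ) (u v : (Fin r → ℕ) → ℂ) :
    mvBell α (fun μ => u μ + v μ)
      = ∑ β ∈ Finset.Iic α, (∏ i, ((α i).choose (β i) : ℂ)) * mvBell β u * mvBell (α - β) v := by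
  rw [mvBell_eq]
  have step1 : ∀ n ∈ Finset.range (deg α + 1),
      fc α / ((Nat.factorial n : ℕ) : ℂ) * C n α (fun μ => u μ + v μ)
        = ∑ β ∈ Finset.Iic α, ∑ k ∈ Finset.range (n+1),
            fc α / ((Nat.factorial n : ℕ) : ℂ) *
              (((n.choose k : ℕ) : ℂ) * C k β u * C (n - k) (α - β) v) := by
    intro n _
    rw [C_bin, Finset.mul_sum]
    exact Finset.sum_congr rfl fun β _ => by rw [Finset.mul_sum]
  rw [Finset.sum_congr rfl step1, Finset.sum_comm]
  apply Finset.sum_congr rfl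
  intro β hβ
  rw [Finset.mem_Iic] at hβ
  set γ := α - β with hγ
  set G : ℕ × ℕ → ℂ := fun p =>
    fc α / ((Nat.factorial (p.1 + p.2) : ℕ) : ℂ) * (((p.1+p.2).choose p.1 : ℕ) : ℂ)
      * C p.1 β u * C p.2 γ v with hG
  have step2 : ∀ n ∈ Finset.range (deg α + 1),
      (∑ k ∈ Finset.range (n+1),
        fc α / ((Nat.factorial n : ℕ) : ℂ) *
          (((n.choose k : ℕ) : ℂ) * C k β u * C (n - k) (α - β) v))
      = ∑ p ∈ Finset.HasAntidiagonal.antidiagonal n, G p := by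
    intro n _
    rw [Finset.Nat.sum_antidiagonal_eq_sum_range_succ_mk]
    apply Finset.sum_congr rfl
    intro k hk
    rw [Finset.mem_range] at hk
    simp only [hG]
    rw [show k + (n - k) = n from by omega]
    ring
  rw [Finset.sum_congr rfl step2]
  have hT : (Finset.range (deg α + 1)).biUnion (fun n => Finset.HasAntidiagonal.antidiagonal n)
      = ((Finset.range (deg α + 1)) ×ˢ (Finset.range (deg α + 1))).filter
          (fun p => p.1 + p.2 ≤ deg α) := by
    ext p
    simp only [Finset.mem_biUnion, Finset.mem_range, Finset.HasAntidiagonal.mem_antidiagonal,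
      Finset.mem_filter, Finset.mem_product]
    constructor
    · rintro ⟨n, hn, rfl⟩
      omega
    · rintro ⟨⟨h1, h2⟩, h3⟩
      exact ⟨p.1 + p.2, by omega, rfl⟩
  have hdisj : (↑(Finset.range (deg α + 1)) : Set ℕ).PairwiseDisjoint
      (fun n => Finset.HasAntidiagonal.antidiagonal n) := by
    intro a _ b _ hab
    simp only [Function.onFun]
    rw [Finset.disjoint_left]
    intro p hpa hpb
    rw [Finset.HasAntidiagonal.mem_antidiagonal] at hpa hpb
    exact hab (hpa ▸ hpb)
  rw [← Finset.sum_biUnion hdisj, hT]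
  have hbox : ∀ p ∈ ((Finset.range (deg α + 1)) ×ˢ (Finset.range (deg α + 1))).filter
          (fun p => p.1 + p.2 ≤ deg α),
      p ∉ (Finset.range (deg β + 1)) ×ˢ (Finset.range (deg γ + 1)) → G p = 0 := by
    intro p _ hp
    rw [Finset.mem_product, Finset.mem_range, Finset.mem_range] at hp
    push_neg at hp
    by_cases h1 : p.1 < deg β + 1
    · have h2 : deg γ < p.2 := by have := hp h1; omega
      simp only [hG]
      rw [C_vanish _ _ _ h2]
      ring
    · have h2 : deg β < p.1 := by omega
      simp only [hG]
      rw [C_vanish _ _ _ h2]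
      ring
  have hsub : (Finset.range (deg β + 1)) ×ˢ (Finset.range (deg γ + 1))
      ⊆ ((Finset.range (deg α + 1)) ×ˢ (Finset.range (deg α + 1))).filter
          (fun p => p.1 + p.2 ≤ deg α) := by
    intro p hp
    rw [Finset.mem_product, Finset.mem_range, Finset.mem_range] at hp
    have hd : deg β + deg γ = deg α := deg_add_deg_sub hβ
    rw [Finset.mem_filter, Finset.mem_product, Finset.mem_range, Finset.mem_range]
    omega
  rw [← Finset.sum_subset hsub hbox]
  rw [Finset.sum_product]
  have step3 : ∀ k ∈ Finset.range (deg β + 1), ∀ m ∈ Finset.range (deg γ + 1),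
      G (k, m) = (∏ i, ((α i).choose (β i) : ℂ)) *
        ((fc β / ((Nat.factorial k : ℕ) : ℂ)) * C k β u) *
        ((fc γ / ((Nat.factorial m : ℕ) : ℂ)) * C m γ v) := by
    intro k _ m _
    simp only [hG]
    rw [show fc α / ((Nat.factorial (k+m) : ℕ) : ℂ) * (((k+m).choose k : ℕ) : ℂ)
        * C k β u * C m γ v
      = (fc α / ((Nat.factorial (k+m) : ℕ) : ℂ) * (((k+m).choose k : ℕ) : ℂ))
        * C k β u * C m γ v from by ring]
    rw [coeff_eq hβ k m]
    ring
  calc ∑ k ∈ Finset.range (deg β + 1), ∑ m ∈ Finset.range (deg γ + 1), G (k, m)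
      = ∑ k ∈ Finset.range (deg β + 1), ∑ m ∈ Finset.range (deg γ + 1),
          (∏ i, ((α i).choose (β i) : ℂ)) *
            ((fc β / ((Nat.factorial k : ℕ) : ℂ)) * C k β u) *
            ((fc γ / ((Nat.factorial m : ℕ) : ℂ)) * C m γ v) := by
        apply Finset.sum_congr rfl
        intro k hk
        exact Finset.sum_congr rfl fun m hm => step3 k hk m hm
    _ = (∏ i, ((α i).choose (β i) : ℂ)) *
          (∑ k ∈ Finset.range (deg β + 1), (fc β / ((Nat.factorial k : ℕ) : ℂ)) * C k β u) *
          (∑ m ∈ Finset.range (deg γ + 1), (fc γ / ((Nat.factorial m : ℕ) : ℂ)) * C m γ v) := by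
        have e1 : ∀ k ∈ Finset.range (deg β + 1),
            (∑ m ∈ Finset.range (deg γ + 1),
              (∏ i, ((α i).choose (β i) : ℂ)) *
                ((fc β / ((Nat.factorial k : ℕ) : ℂ)) * C k β u) *
                ((fc γ / ((Nat.factorial m : ℕ) : ℂ)) * C m γ v))
            = (∏ i, ((α i).choose (β i) : ℂ)) *
                ((fc β / ((Nat.factorial k : ℕ) : ℂ)) * C k β u) *
                (∑ m ∈ Finset.range (deg γ + 1),
                  (fc γ / ((Nat.factorial m : ℕ) : ℂ)) * C m γ v) := by
          intro k _
          rw [← Finset.mul_sum]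
        rw [Finset.sum_congr rfl e1, ← Finset.sum_mul, ← Finset.mul_sum]
    _ = (∏ i, ((α i).choose (β i) : ℂ)) * mvBell β u * mvBell γ v := by
        rw [mvBell_eq, mvBell_eq]

lemma deg_zero : deg (0 : Fin r → ℕ) = 0 := by simp [deg]

lemma mvBell_zero (x : (Fin r → ℕ) → ℂ) : mvBell (0 : Fin r → ℕ) x = 1 := by
  rw [mvBell_eq, deg_zero, Finset.range_one, Finset.sum_singleton, C]
  simp [fc]

lemma mvBell_congr {α : Fin r → ℕ} {x y : (Fin r → ℕ) → ℂ}
    (h : ∀ μ, μ ≤ α → μ ≠ 0 → x μ = y μ) : mvBell α x = mvBell α y := by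
  rw [mvBell_eq, mvBell_eq]
  exact Finset.sum_congr rfl fun n _ => by rw [C_congr n α x y h]

lemma deg_lt {μ α : Fin r → ℕ} (hle : μ ≤ α) (hne : μ ≠ α) : deg μ < deg α := by
  have h2 : deg μ ≤ deg α := Finset.sum_le_sum fun i _ => hle i
  rcases lt_or_eq_of_le h2 with h | h
  · exact h
  · exfalso
    apply hne
    funext i
    exact (Finset.sum_eq_sum_iff_of_le fun i _ => hle i).mp h i (Finset.mem_univ i)

lemma pi_sub_self (α : Fin r → ℕ) : α - α = 0 := funext fun i => Nat.sub_self _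

lemma C_top {α : Fin r → ℕ} (n : ℕ) (x y : (Fin r → ℕ) → ℂ)
    (h : ∀ μ, μ ≤ α → μ ≠ 0 → μ ≠ α → x μ = y μ) : C (n+2) α x = C (n+2) α y := by
  rw [C, C]
  apply Finset.sum_congr rfl
  intro μ hμ
  rw [Finset.mem_erase, Finset.mem_Iic] at hμ
  by_cases hμα : μ = α
  · subst hμα
    rw [pi_sub_self, C_zero_succ n x, C_zero_succ n y, mul_zero, mul_zero]
  · rw [h μ hμ.2 hμ.1 hμα]
    congr 1
    apply C_congr
    intro ν hν hν0
    have hνα : ν ≠ α := by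
      intro hcon
      have h1 : deg ν ≤ deg (α - μ) := Finset.sum_le_sum fun i _ => hν i
      have h2 : deg (α - μ) < deg α := deg_sub_lt hμ.2 hμ.1
      rw [hcon] at h1
      omega
    exact h ν (hν.trans (sub_le_self' α μ)) hν0 hνα

lemma mvBell_top {α : Fin r → ℕ} (hα : α ≠ 0) (x y : (Fin r → ℕ) → ℂ)
    (h : ∀ μ, μ ≤ α → μ ≠ 0 → μ ≠ α → x μ = y μ) :
    mvBell α x - x α = mvBell α y - y α := by
  have hD : 1 ≤ deg α := deg_pos hα
  have key : ∀ z : (Fin r → ℕ) → ℂ,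
      (∑ n ∈ Finset.range (deg α + 1), fc α / ((Nat.factorial n : ℕ) : ℂ) * C n α z)
      = z α + ∑ n ∈ Finset.range (deg α + 1),
          (if n = 1 then 0 else fc α / ((Nat.factorial n : ℕ) : ℂ) * C n α z) := by
    intro z
    have h1 : ∀ n ∈ Finset.range (deg α + 1),
        fc α / ((Nat.factorial n : ℕ) : ℂ) * C n α z
          = (if n = 1 then z α else 0)
            + (if n = 1 then 0 else fc α / ((Nat.factorial n : ℕ) : ℂ) * C n α z) := by
      intro n _
      by_cases hn : n = 1
      · subst hn
        rw [if_pos rfl, if_pos rfl, C_one hα, add_zero]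
        rw [show (Nat.factorial 1 : ℕ) = 1 from rfl]
        rw [Nat.cast_one, div_one]
        field_simp [fc_ne_zero]
      · rw [if_neg hn, if_neg hn, zero_add]
    rw [Finset.sum_congr rfl h1, Finset.sum_add_distrib]
    congr 1
    rw [Finset.sum_ite_eq' (Finset.range (deg α + 1)) 1 (fun _ => z α)]
    rw [if_pos (Finset.mem_range.mpr (by omega))]
  rw [mvBell_eq, mvBell_eq, key x, key y]
  have hsame : (∑ n ∈ Finset.range (deg α + 1),
      (if n = 1 then 0 else fc α / ((Nat.factorial n : ℕ) : ℂ) * C n α x))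
      = ∑ n ∈ Finset.range (deg α + 1),
          (if n = 1 then 0 else fc α / ((Nat.factorial n : ℕ) : ℂ) * C n α y) := by
    apply Finset.sum_congr rfl
    intro n _
    by_cases hn : n = 1
    · rw [if_pos hn, if_pos hn]
    · rw [if_neg hn, if_neg hn]
      match n, hn with
      | 0, _ => rw [C, C]
      | 1, hn => exact absurd rfl hn
      | (k+2), _ => rw [C_top k x y h]
  rw [hsame]
  ring

noncomputable def aF {G : Type*} [AddCommGroup G] (g : (Fin r → ℕ) → G → ℂ)
    (α : Fin r → ℕ) (x : G) : ℂ :=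
  g α x - mvBell α (fun μ => if h : deg μ < deg α then aF g μ x else 0)
termination_by deg α
decreasing_by exact h

lemma aF_eq {G : Type*} [AddCommGroup G] (g : (Fin r → ℕ) → G → ℂ)
    (α : Fin r → ℕ) (x : G) :
    aF g α x = g α x - mvBell α (fun μ => if _h : deg μ < deg α then aF g μ x else 0) := by
  rw [aF]

end Stmt18

theorem stmt_18 {G : Type*} [AddCommGroup G] (r : ℕ) (hr : 1 ≤ r)
    (f : (Fin r → ℕ) → G → ℂ) (m : G → ℂ)
    (hf : ∀ (α : Fin r → ℕ) (x y : G),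
      f α (x + y) = ∑ β ∈ Finset.Iic α,
        (∏ i, ((α i).choose (β i) : ℂ)) * f β x * f (α - β) y)
    (h0 : f 0 = m) (hm : m ≠ 0) :
    ∃ a : (Fin r → ℕ) → G → ℂ,
      (∀ μ : Fin r → ℕ, μ ≠ 0 → ∀ x y : G, a μ (x + y) = a μ x + a μ y) ∧
      ∀ (α : Fin r → ℕ) (x : G), f α x = mvBell α (fun μ => a μ x) * m x := by
  classical
  open Stmt18 in
  -- multiplicativity of m
  have hmul : ∀ x y : G, m (x + y) = m x * m y := by
    intro x y
    have h := hf 0 x y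
    rw [Iic_zero, Finset.sum_singleton, pi_sub_zero] at h
    simp only [Pi.zero_apply, Nat.choose_self, Nat.cast_one, Finset.prod_const_one,
      one_mul] at h
    rw [h0] at h
    exact h
  have hm0 : ∀ x, m x ≠ 0 := by
    intro x hx
    apply hm
    funext w
    have hw : x + (w - x) = w := by abel
    have := hmul x (w - x)
    rw [hw, hx, zero_mul] at this
    exact this
  set g : (Fin r → ℕ) → G → ℂ := fun α x => f α x / m x with hgdef
  have hg0 : ∀ x, g 0 x = 1 := by
    intro x
    simp only [hgdef]
    rw [show f 0 x = m x from congrFun h0 x]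
    exact div_self (hm0 x)
  have hgconv : ∀ (α : Fin r → ℕ) (x y : G), g α (x + y)
      = ∑ β ∈ Finset.Iic α, (∏ i, ((α i).choose (β i) : ℂ)) * g β x * g (α - β) y := by
    intro α x y
    simp only [hgdef]
    rw [hf α x y, hmul x y, Finset.sum_div]
    apply Finset.sum_congr rfl
    intro β _
    field_simp
  have hkey : ∀ (α : Fin r → ℕ) (x : G), mvBell α (fun μ => aF g μ x) = g α x := by
    intro α x
    by_cases hα : α = 0
    · subst hα
      rw [mvBell_zero, hg0]
    · have hagree : ∀ μ, μ ≤ α → μ ≠ 0 → μ ≠ α →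
          (fun μ => aF g μ x) μ = (fun μ => if _h : deg μ < deg α then aF g μ x else 0) μ := by
        intro μ h1 _ h3
        simp only []
        rw [dif_pos (deg_lt h1 h3)]
      have htop := mvBell_top hα (fun μ => aF g μ x)
        (fun μ => if _h : deg μ < deg α then aF g μ x else 0) hagree
      have e2 : (fun μ => if _h : deg μ < deg α then aF g μ x else 0) α = 0 := by
        simp only []
        rw [dif_neg (lt_irrefl _)]
      rw [show (if _h : deg α < deg α then aF g α x else 0) = 0 from e2, sub_zero] at htop
      have e1 := aF_eq g α x
      have hsum := eq_add_of_sub_eq htop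
      rw [hsum]
      have hbeta : (fun μ => aF g μ x) α = aF g α x := rfl
      rw [e1]
      ring
  have hadd : ∀ d (μ : Fin r → ℕ), deg μ ≤ d → ∀ x y : G,
      aF g μ (x + y) = aF g μ x + aF g μ y := by
    intro d
    induction d using Nat.strong_induction_on with
    | _ d ih =>
      intro α hα x y
      by_cases hα0 : α = 0
      · subst hα0
        have hz : ∀ z : G, aF g 0 z = 0 := by
          intro z
          rw [aF_eq, mvBell_zero, hg0]
          ring
        rw [hz, hz, hz]
        ring
      · have hub : mvBell α (fun μ => aF g μ x + aF g μ y) = g α (x + y) := by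
          rw [mvBell_bin, hgconv]
          apply Finset.sum_congr rfl
          intro β _
          rw [hkey, hkey]
        have hw : mvBell α (fun μ => aF g μ (x + y)) = g α (x + y) := hkey α (x + y)
        have hagree : ∀ μ, μ ≤ α → μ ≠ 0 → μ ≠ α →
            (fun μ => aF g μ x + aF g μ y) μ = (fun μ => aF g μ (x + y)) μ := by
          intro μ h1 _ h3
          simp only []
          exact (ih (deg μ) (lt_of_lt_of_le (deg_lt h1 h3) hα) μ le_rfl x y).symm
        have htop := mvBell_top hα0 (fun μ => aF g μ x + aF g μ y)
          (fun μ => aF g μ (x + y)) hagree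
        rw [hub, hw, sub_right_inj] at htop
        exact htop.symm
  refine ⟨aF g, fun μ _ x y => hadd (deg μ) μ le_rfl x y, fun α x => ?_⟩
  rw [hkey]
  simp only [hgdef]
  exact (div_mul_cancel₀ _ (hm0 x)).symm
end
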